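/- arXiv:1506.03442 — 3 statements merged into one kernel-verified Lean document; each statement's English description precedes it below -/
import Mathlib

section
/- There is no connected bipartite graph G, with stable sets U and W of sizes |U| = r ≤ s = |W| and order r + s ≥ 4, satisfying λ(Ḡ) = λ(G) + 1 together with 3r/2 ≤ s < 3r/2 + 1 (i.e., 3r ≤ 2s and 2s < 3r + 2). -/
set_option maxRecDepth 8000

open SimpleGraph

/-- `S` is a dominating set of `G`: every vertex outside `S` has a neighbor in `S`. -/
def isDomSet {α : Type*} (G : SimpleGraph α) (S : Set α) : Prop :=
  ∀ v ∉ S, ∃ u ∈ S, G.Adj v u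

/-- `S` is a locating-dominating set (LD-set) of `G`. -/
def isLDSet {α : Type*} (G : SimpleGraph α) (S : Set α) : Prop :=
  isDomSet G S ∧ ∀ u ∉ S, ∀ v ∉ S, u ≠ v →
    G.neighborSet u ∩ S ≠ G.neighborSet v ∩ S

/-- The location-domination number `λ(G)`. -/
noncomputable def ldNum {α : Type*} (G : SimpleGraph α) : ℕ :=
  sInf {n | ∃ S : Set α, isLDSet G S ∧ S.ncard = n}

/-- The global location-domination number `λ_g(G)`. -/
noncomputable def gldNum {α : Type*} (G : SimpleGraph α) : ℕ :=
  sInf {n | ∃ S : Set α, isLDSet G S ∧ isLDSet Gᶜ S ∧ S.ncard = n}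

/-- `G` is bipartite with stable sets `U` and `W`. -/
def bipartiteWith {α : Type*} (G : SimpleGraph α) (U W : Set α) : Prop :=
  U ∪ W = Set.univ ∧ Disjoint U W ∧
    ∀ ⦃u v : α⦄, G.Adj u v → (u ∈ U ∧ v ∈ W) ∨ (u ∈ W ∧ v ∈ U)

section Auxiliary

open Module


section Helpers

lemma zmod2_cases : ∀ x : ZMod 2, x = 0 ∨ x = 1 := by decide

lemma zmod2_mul_eq_one : ∀ {x y : ZMod 2}, x * y = 1 → x = 1 ∧ y = 1 := by decide

lemma zmod2_add_eq_zero : ∀ {x y : ZMod 2}, x + y = 0 → x = y := by decide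

lemma zmod2_ne_zero : ∀ {x : ZMod 2}, x ≠ 0 → x = 1 := by decide

lemma set_ne_elim {α : Type*} {A B : Set α} (h : A ≠ B) :
    ∃ y, (y ∈ A ∧ y ∉ B) ∨ (y ∈ B ∧ y ∉ A) := by
  by_contra hc
  push_neg at hc
  apply h
  ext y
  have h1 := (hc y).1
  have h2 := (hc y).2
  constructor
  · exact h1
  · exact h2

end Helpers

section SpanSingles

lemma span_singles {X : Type} [Fintype X] [DecidableEq X] (T : Finset (X → ZMod 2)) (W' : Finset X)
    (h : ∀ w ∈ W', Pi.single w (1 : ZMod 2) ∈ Submodule.span (ZMod 2) (T : Set (X → ZMod 2))) :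
    W'.card ≤ T.card := by
  classical
  set P := Submodule.span (ZMod 2) (T : Set (X → ZMod 2)) with hP
  have hind : LinearIndependent (ZMod 2)
      (fun w : ↥W' => (Pi.single (w : X) (1 : ZMod 2) : X → ZMod 2)) := by
    have hb := (Pi.basisFun (ZMod 2) X).linearIndependent
    have : (fun w : ↥W' => (Pi.single (w : X) (1 : ZMod 2) : X → ZMod 2))
        = (fun x : X => (Pi.basisFun (ZMod 2) X) x) ∘ (fun w : ↥W' => (w : X)) := by
      funext w
      simp [Pi.basisFun_apply]
  -- careful with basisFun_apply form
    rw [this]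
    exact hb.comp _ Subtype.val_injective
  have hind' : LinearIndependent (ZMod 2)
      (fun w : ↥W' => (⟨Pi.single (w : X) (1 : ZMod 2), h w w.2⟩ : ↥P)) := by
    apply LinearIndependent.of_comp (P.subtype)
    exact hind
  have hcard := hind'.fintype_card_le_finrank
  have hle : Module.finrank (ZMod 2) ↥P ≤ T.card := by
    have := finrank_span_le_card (R := ZMod 2) (T : Set (X → ZMod 2))
    simpa using this
  simpa [Fintype.card_coe] using hcard.trans hle

end SpanSingles

lemma zmod2_mul_eq_one' : ∀ {x y : ZMod 2}, x * y = 1 → x = 1 ∧ y = 1 := by decide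
lemma zmod2_cases' : ∀ x : ZMod 2, x = 0 ∨ x = 1 := by decide

/-- The submodule of vectors `a` satisfying `a j * h j k = a k * h k j`. -/
def KSub {ι : Type} [Fintype ι] (h : ι → ι → ZMod 2) : Submodule (ZMod 2) (ι → ZMod 2) where
  carrier := {a | ∀ j k, a j * h j k = a k * h k j}
  zero_mem' := by intro j k; simp
  add_mem' := by
    intro a b ha hb j k
    simp only [Pi.add_apply, add_mul]
    rw [ha j k, hb j k]
  smul_mem' := by
    intro c a ha j k
    simp only [Pi.smul_apply, smul_eq_mul, mul_assoc]
    rw [ha j k]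

lemma ks_bound {ι : Type} [Fintype ι] (h : ι → ι → ZMod 2)
    (hh : ∀ i, ∃ k, k ≠ i ∧ h i k = 1) :
    2 * Module.finrank (ZMod 2) ↥(KSub h) ≤ Fintype.card ι := by
  classical
  set K := KSub h with hK
  -- key fact
  have key1 : ∀ a ∈ K, ∀ j k, a j = 1 → h j k = 1 → a k = 1 ∧ h k j = 1 := by
    intro a ha j k haj hjk
    have := ha j k
    rw [haj, hjk] at this
    simp at this
    exact zmod2_mul_eq_one' this.symm
  choose pk hpk1 hpk2 using hh
  set Act : Set ι := {j | ∃ a, a ∈ K ∧ a j = 1} with hAct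
  have link1 : ∀ j ∈ Act, h (pk j) j = 1 := by
    rintro j ⟨a, ha, haj⟩
    exact (key1 a ha j (pk j) haj (hpk2 j)).2
  have link : ∀ j ∈ Act, ∀ a ∈ K, a (pk j) = a j := by
    intro j hj a ha
    rcases zmod2_cases' (a j) with h0 | h1
    · rcases zmod2_cases' (a (pk j)) with g0 | g1
      · rw [h0, g0]
      · exfalso
        have := (key1 a ha (pk j) j g1 (link1 j hj)).1
        rw [this] at h0
        exact one_ne_zero h0
    · rw [h1, (key1 a ha j (pk j) h1 (hpk2 j)).1]
  have kAct : ∀ j ∈ Act, pk j ∈ Act := by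
    rintro j hj
    obtain ⟨a, ha, haj⟩ := hj
    exact ⟨a, ha, by rw [link j ⟨a, ha, haj⟩ a ha, haj]⟩
  -- setoid on Act
  let st : Setoid ↥Act := ⟨fun p q => ∀ a ∈ K, a (p : ι) = a (q : ι),
    ⟨fun p a _ => rfl, fun hpq a ha => (hpq a ha).symm, fun hpq hqr a ha => (hpq a ha).trans (hqr a ha)⟩⟩
  haveI : Fintype ↥Act := Fintype.ofFinite _
  haveI : Fintype (Quotient st) := Fintype.ofFinite _
  -- injective linear map K → (Quotient st → F)
  let ρ : ↥K →ₗ[ZMod 2] (Quotient st → ZMod 2) :=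
    { toFun := fun a => fun q => (a : ι → ZMod 2) ((q.out : ↥Act) : ι)
      map_add' := by intro a b; funext q; simp
      map_smul' := by intro c a; funext q; simp }
  have hρinj : Function.Injective ρ := by
    rw [injective_iff_map_eq_zero]
    intro a ha0
    apply Subtype.ext
    funext j
    by_cases hj : j ∈ Act
    · let p : ↥Act := ⟨j, hj⟩
      have hout : st.r (Quotient.mk st p).out p := Quotient.exact (Quotient.out_eq _)
      have h1 : (a : ι → ZMod 2) j = (a : ι → ZMod 2) ((Quotient.mk st p).out : ι) :=
        (hout (a : ι → ZMod 2) a.2).symm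
      have h2 : ρ a (Quotient.mk st p) = 0 := by rw [ha0]; rfl
      rw [h1]
      exact h2
    · by_contra hne
      exact hj ⟨a, a.2, by
        rcases zmod2_cases' ((a : ι → ZMod 2) j) with h0 | h1
        · exact absurd h0 hne
        · exact h1⟩
  have hr1 : Module.finrank (ZMod 2) ↥K ≤ Fintype.card (Quotient st) := by
    have := LinearMap.finrank_le_finrank_of_injective hρinj
    simpa [Module.finrank_pi] using this
  -- fibers have size ≥ 2
  have hfib : 2 * Fintype.card (Quotient st) ≤ Fintype.card ↥Act := by
    have hcardsum := Finset.card_eq_sum_card_fiberwise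
      (f := fun p : ↥Act => (Quotient.mk st p : Quotient st)) (s := Finset.univ) (t := Finset.univ)
      (fun x _ => Finset.mem_univ _)
    have hterm : ∀ q ∈ (Finset.univ : Finset (Quotient st)), 2 ≤
        (Finset.univ.filter (fun p : ↥Act => (Quotient.mk st p : Quotient st) = q)).card := by
      intro q _
      set p : ↥Act := q.out with hp
      have hpin : (Quotient.mk st p : Quotient st) = q := Quotient.out_eq q
      have hpAct : (p : ι) ∈ Act := p.2
      let p' : ↥Act := ⟨pk (p : ι), kAct _ hpAct⟩
      have hp'q : (Quotient.mk st p' : Quotient st) = q := by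
        rw [← hpin]
        exact Quotient.sound (fun a ha => link (p : ι) hpAct a ha)
      have hne : p' ≠ p := fun hcon => hpk1 (p : ι) (congrArg Subtype.val hcon)
      have hsub : ({p', p} : Finset ↥Act) ⊆
          Finset.univ.filter (fun x : ↥Act => (Quotient.mk st x : Quotient st) = q) := by
        intro x hx
        simp only [Finset.mem_insert, Finset.mem_singleton] at hx
        rcases hx with rfl | rfl
        · simp [hp'q]
        · simp [hpin]
      have := Finset.card_le_card hsub
      rwa [Finset.card_pair hne] at this
    calc 2 * Fintype.card (Quotient st)
        = (Finset.univ : Finset (Quotient st)).card • 2 := by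
          rw [smul_eq_mul, mul_comm]
          rfl
      _ ≤ ∑ q : Quotient st,
          (Finset.univ.filter (fun p : ↥Act => (Quotient.mk st p : Quotient st) = q)).card :=
          Finset.card_nsmul_le_sum _ _ _ hterm
      _ = Fintype.card ↥Act := by rw [← hcardsum]; rfl
  have hActle : Fintype.card ↥Act ≤ Fintype.card ι :=
    Fintype.card_le_of_injective Subtype.val Subtype.val_injective
  omega

/-- dot product functional -/
lemma zmod2_add_eq_zero'' : ∀ {x y : ZMod 2}, x + y = 0 → x = y := by decide
lemma zmod2_sub' : ∀ {x y z : ZMod 2}, x + y = z → y = x + z := by decide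

def lfun {κ : Type} [Fintype κ] (ψ : κ → ZMod 2) : (κ → ZMod 2) →ₗ[ZMod 2] ZMod 2 where
  toFun := fun φ => ∑ w, φ w * ψ w
  map_add' := by
    intro a b
    simp [add_mul, Finset.sum_add_distrib]
  map_smul' := by
    intro c a
    simp [Finset.mul_sum, mul_assoc]

lemma lfun_single {κ : Type} [Fintype κ] [DecidableEq κ] (ψ : κ → ZMod 2) (w0 : κ) :
    lfun ψ (Pi.single w0 1) = ψ w0 := by
  simp only [lfun, LinearMap.coe_mk, AddHom.coe_mk]
  rw [Finset.sum_eq_single w0]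
  · simp
  · intro b _ hb
    simp [Pi.single_eq_of_ne hb]
  · intro hw; exact absurd (Finset.mem_univ w0) hw


lemma core {ι κ : Type} [Fintype ι] [Fintype κ] [DecidableEq ι] [DecidableEq κ] [Nonempty ι]
    (g : κ → ι → ZMod 2)
    (hq : ∀ i : ι, ∃ w w' x x' : κ,
      g w + g w' = Pi.single i 1 ∧ g x + g x' = Pi.single i 1 ∧ g x ≠ g w ∧ g x ≠ g w') :
    3 * Fintype.card ι + 2 ≤ 2 * Fintype.card κ := by
  classical
  choose cw cw' cx cx' hw hx hxw hxw' using hq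
  set A : ι → (κ → ZMod 2) := fun i => Pi.single (cw i) 1 + Pi.single (cw' i) 1 with hA
  set B : ι → (κ → ZMod 2) := fun i => Pi.single (cx i) 1 + Pi.single (cx' i) 1 with hB
  set h : ι → ι → ZMod 2 := fun i => g (cw i) + g (cx i) with hh
  -- pointwise decompositions
  have hgw' : ∀ i, g (cw' i) = g (cw i) + Pi.single i 1 := by
    intro i; funext t
    exact zmod2_sub' (congrFun (hw i) t)
  have hgx' : ∀ i, g (cx' i) = g (cx i) + Pi.single i 1 := by
    intro i; funext t
    exact zmod2_sub' (congrFun (hx i) t)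
  -- h has an off-diagonal 1
  have hhod : ∀ i, ∃ k, k ≠ i ∧ h i k = 1 := by
    intro i
    by_contra hc
    push_neg at hc
    -- then g (cx i) = g (cw i) or = g (cw' i)
    have hoff : ∀ k, k ≠ i → g (cx i) k = g (cw i) k := by
      intro k hk
      have := hc k hk
      rcases (by decide : ∀ x : ZMod 2, x = 0 ∨ x = 1) (h i k) with h0 | h1
      · have : g (cw i) k + g (cx i) k = 0 := h0
        exact (zmod2_add_eq_zero'' this).symm
      · exact absurd h1 this
    rcases (by decide : ∀ x : ZMod 2, x = 0 ∨ x = 1) (h i i) with h0 | h1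
    · apply hxw i
      funext k
      by_cases hk : k = i
      · subst hk
        have : g (cw k) k + g (cx k) k = 0 := h0
        exact (zmod2_add_eq_zero'' this).symm
      · exact hoff k hk
    · apply hxw' i
      rw [hgw' i]
      funext k
      by_cases hk : k = i
      · subst hk
        have h1' : g (cw k) k + g (cx k) k = 1 := h1
        have : g (cx k) k = g (cw k) k + 1 := zmod2_sub' h1'
        simp [this, Pi.single_eq_same]
      · rw [Pi.add_apply, Pi.single_eq_of_ne hk, hoff k hk]
        simp
  -- the big linear map
  set Θ : ((ι ⊕ ι) → ZMod 2) →ₗ[ZMod 2] (κ → ZMod 2) :=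
    { toFun := fun c => ∑ i, c (Sum.inl i) • A i + ∑ i, c (Sum.inr i) • B i
      map_add' := by
        intro a b
        simp only [Pi.add_apply, add_smul, Finset.sum_add_distrib]
        abel
      map_smul' := by
        intro c a
        simp only [Pi.smul_apply, smul_eq_mul, RingHom.id_apply, smul_add, Finset.smul_sum,
          smul_smul]
    } with hΘ
  -- ℓ : sum functional
  set ℓ : (κ → ZMod 2) →ₗ[ZMod 2] ZMod 2 := lfun (fun _ => 1) with hℓ
  have hℓA : ∀ i, ℓ (A i) = 0 := by
    intro i
    simp only [hA, hℓ, map_add, lfun_single]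
    decide
  have hℓB : ∀ i, ℓ (B i) = 0 := by
    intro i
    simp only [hB, hℓ, map_add, lfun_single]
    decide
  have hrangeΘ : LinearMap.range Θ ≤ LinearMap.ker ℓ := by
    rintro y ⟨c, rfl⟩
    simp only [LinearMap.mem_ker, hΘ, LinearMap.coe_mk, AddHom.coe_mk, map_add, map_sum,
      map_smul, hℓA, hℓB, smul_zero, Finset.sum_const_zero, add_zero]
  -- ℓ is surjective
  have hκne : Nonempty κ := ⟨cw (Classical.arbitrary ι)⟩
  have hℓsurj : Function.Surjective ℓ := by
    intro y
    obtain ⟨w0⟩ := hκne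
    exact ⟨Pi.single w0 y, by
      have : ℓ (Pi.single w0 y) = y * 1 := by
        simp only [hℓ, lfun, LinearMap.coe_mk, AddHom.coe_mk]
        rw [Finset.sum_eq_single w0]
        · simp
        · intro b _ hb; simp [Pi.single_eq_of_ne hb]
        · intro hw; exact absurd (Finset.mem_univ w0) hw
      rw [this, mul_one]⟩
  -- kernel elements: coordinates match between inl and inr
  have hlemA : ∀ c ∈ LinearMap.ker Θ, ∀ j, c (Sum.inl j) = c (Sum.inr j) := by
    intro c hc j
    set Sj : (κ → ZMod 2) →ₗ[ZMod 2] ZMod 2 := lfun (fun w => g w j) with hSj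
    have hSjA : ∀ i, Sj (A i) = (Pi.single i 1 : ι → ZMod 2) j := by
      intro i
      simp only [hA, hSj, map_add, lfun_single]
      exact congrFun (hw i) j
    have hSjB : ∀ i, Sj (B i) = (Pi.single i 1 : ι → ZMod 2) j := by
      intro i
      simp only [hB, hSj, map_add, lfun_single]
      exact congrFun (hx i) j
    have h0 : Sj (Θ c) = 0 := by rw [LinearMap.mem_ker.mp hc, map_zero]
    have hexp : Sj (Θ c) = c (Sum.inl j) + c (Sum.inr j) := by
      simp only [hΘ, LinearMap.coe_mk, AddHom.coe_mk, map_add, map_sum, map_smul, hSjA, hSjB,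
        smul_eq_mul]
      congr 1
      · rw [Finset.sum_eq_single j]
        · rw [Pi.single_eq_same, mul_one]
        · intro b _ hb
          rw [Pi.single_eq_of_ne (Ne.symm hb), mul_zero]
        · intro hj; exact absurd (Finset.mem_univ j) hj
      · rw [Finset.sum_eq_single j]
        · rw [Pi.single_eq_same, mul_one]
        · intro b _ hb
          rw [Pi.single_eq_of_ne (Ne.symm hb), mul_zero]
        · intro hj; exact absurd (Finset.mem_univ j) hj
    rw [hexp] at h0
    exact zmod2_add_eq_zero'' h0
  have hlemB : ∀ c ∈ LinearMap.ker Θ, (fun j => c (Sum.inl j)) ∈ KSub h := by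
    intro c hc j k
    set Tjk : (κ → ZMod 2) →ₗ[ZMod 2] ZMod 2 := lfun (fun w => g w j * g w k) with hTjk
    have hTA : ∀ i, Tjk (A i) =
        g (cw i) j * g (cw i) k +
        (g (cw i) j + (Pi.single i 1 : ι → ZMod 2) j) * (g (cw i) k + (Pi.single i 1 : ι → ZMod 2) k) := by
      intro i
      simp only [hA, hTjk, map_add, lfun_single]
      rw [hgw' i]
      simp
    have hTB : ∀ i, Tjk (B i) =
        g (cx i) j * g (cx i) k +
        (g (cx i) j + (Pi.single i 1 : ι → ZMod 2) j) * (g (cx i) k + (Pi.single i 1 : ι → ZMod 2) k) := by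
      intro i
      simp only [hB, hTjk, map_add, lfun_single]
      rw [hgx' i]
      simp
    have h0 : Tjk (Θ c) = 0 := by rw [LinearMap.mem_ker.mp hc, map_zero]
    have hexp : Tjk (Θ c) =
        ∑ i, c (Sum.inl i) * (h i j * (Pi.single i 1 : ι → ZMod 2) k + (Pi.single i 1 : ι → ZMod 2) j * h i k) := by
      simp only [hΘ, LinearMap.coe_mk, AddHom.coe_mk, map_add, map_sum, map_smul, hTA, hTB,
        smul_eq_mul]
      rw [← Finset.sum_add_distrib]
      apply Finset.sum_congr rfl
      intro i _
      rw [← hlemA c hc i]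
      rw [← mul_add]
      congr 1
      have key : ∀ p q P Q dj dk : ZMod 2,
          (p*q + (p+dj)*(q+dk)) + (P*Q + (P+dj)*(Q+dk)) = (p+P)*dk + dj*(q+Q) := by decide
      exact key _ _ _ _ _ _
    have hsplit : ∑ i, c (Sum.inl i) *
        (h i j * (Pi.single i 1 : ι → ZMod 2) k + (Pi.single i 1 : ι → ZMod 2) j * h i k)
        = c (Sum.inl k) * h k j + c (Sum.inl j) * h j k := by
      simp only [mul_add]
      rw [Finset.sum_add_distrib]
      congr 1
      · rw [Finset.sum_eq_single k]
        · rw [Pi.single_eq_same, mul_one]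
        · intro b _ hb
          rw [Pi.single_eq_of_ne (Ne.symm hb), mul_zero, mul_zero]
        · intro hk; exact absurd (Finset.mem_univ k) hk
      · rw [Finset.sum_eq_single j]
        · rw [Pi.single_eq_same, one_mul]
        · intro b _ hb
          rw [Pi.single_eq_of_ne (Ne.symm hb), zero_mul, mul_zero]
        · intro hj; exact absurd (Finset.mem_univ j) hj
    rw [hexp, hsplit] at h0
    exact (zmod2_add_eq_zero'' h0).symm
  -- the injective map from ker Θ to KSub h
  set ρ0 : ((ι ⊕ ι) → ZMod 2) →ₗ[ZMod 2] (ι → ZMod 2) := LinearMap.funLeft _ _ Sum.inl with hρ0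
  set π : ↥(LinearMap.ker Θ) →ₗ[ZMod 2] ↥(KSub h) :=
    LinearMap.codRestrict (KSub h) (ρ0.comp (LinearMap.ker Θ).subtype)
      (fun c => hlemB (c : (ι ⊕ ι) → ZMod 2) c.2) with hπ
  have hπinj : Function.Injective π := by
    rw [injective_iff_map_eq_zero]
    intro c hc0
    apply Subtype.ext
    funext t
    have hcoord : ∀ j, (c : (ι ⊕ ι) → ZMod 2) (Sum.inl j) = 0 := by
      intro j
      have := congrFun (congrArg Subtype.val hc0) j
      exact this
    cases t with
    | inl j => exact hcoord j
    | inr j => rw [← hlemA (c : (ι ⊕ ι) → ZMod 2) c.2 j]; exact hcoord j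
  have hkerle : Module.finrank (ZMod 2) ↥(LinearMap.ker Θ) ≤
      Module.finrank (ZMod 2) ↥(KSub h) :=
    LinearMap.finrank_le_finrank_of_injective hπinj
  -- rank-nullity assembly
  have hrnΘ := LinearMap.finrank_range_add_finrank_ker Θ
  have hdomΘ : Module.finrank (ZMod 2) ((ι ⊕ ι) → ZMod 2) = 2 * Fintype.card ι := by
    rw [Module.finrank_pi]
    simp [Fintype.card_sum]
    ring
  have hrnℓ := LinearMap.finrank_range_add_finrank_ker ℓ
  have hrgℓ : Module.finrank (ZMod 2) ↥(LinearMap.range ℓ) = 1 := by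
    rw [LinearMap.range_eq_top.mpr hℓsurj]
    simp
  have hdomℓ : Module.finrank (ZMod 2) (κ → ZMod 2) = Fintype.card κ := Module.finrank_pi _
  have hrgΘle : Module.finrank (ZMod 2) ↥(LinearMap.range Θ) ≤
      Module.finrank (ZMod 2) ↥(LinearMap.ker ℓ) :=
    Submodule.finrank_mono hrangeΘ
  have hks := ks_bound h hhod
  rw [hdomΘ] at hrnΘ
  rw [hrgℓ, hdomℓ] at hrnℓ
  omega

end Auxiliary

lemma set_ne_elim' {α : Type*} {A B : Set α} (h : A ≠ B) :
    ∃ y, (y ∈ A ∧ y ∉ B) ∨ (y ∈ B ∧ y ∉ A) := by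
  by_contra hc
  push_neg at hc
  apply h
  ext y
  exact ⟨(hc y).1, (hc y).2⟩

section GraphPart

variable {V : Type} [Fintype V] (G : SimpleGraph V)

lemma univ_isLD : isLDSet G Set.univ :=
  ⟨fun v hv => absurd (Set.mem_univ v) hv, fun u hu => absurd (Set.mem_univ u) hu⟩

lemma ldNum_exists : ∃ S : Set V, isLDSet G S ∧ S.ncard = ldNum G :=
  Nat.sInf_mem (⟨(Set.univ : Set V).ncard, Set.univ, univ_isLD G, rfl⟩ :
    {n | ∃ S : Set V, isLDSet G S ∧ S.ncard = n}.Nonempty)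

lemma ldNum_le {S : Set V} (hS : isLDSet G S) : ldNum G ≤ S.ncard :=
  Nat.sInf_le ⟨S, hS, rfl⟩

/-- If `S` is LD in `G` and no vertex outside `S` has all of `S` as neighbors,
then `S` is LD in `Gᶜ`. -/
lemma ld_compl_of_no_full {S : Set V} (hS : isLDSet G S)
    (hno : ∀ v ∉ S, ¬ S ⊆ G.neighborSet v) : isLDSet Gᶜ S := by
  constructor
  · intro v hv
    obtain ⟨u, huS, hu⟩ : ∃ u ∈ S, u ∉ G.neighborSet v := by
      by_contra hc
      push_neg at hc
      exact hno v hv (fun u hu => hc u hu)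
    refine ⟨u, huS, ?_⟩
    rw [compl_adj]
    exact ⟨fun h => hv (h ▸ huS), fun h => hu h⟩
  · intro u hu v hv huv heq
    have key : ∀ a, a ∉ S → ∀ y ∈ S, (G.Adj a y ↔ y ∉ Gᶜ.neighborSet a ∩ S) := by
      intro a ha y hy
      have hne : a ≠ y := fun h => ha (h ▸ hy)
      simp only [Set.mem_inter_iff, mem_neighborSet, compl_adj]
      constructor
      · intro hadj hc
        exact hc.1.2 hadj
      · intro hc
        by_contra hnadj
        exact hc ⟨⟨hne, hnadj⟩, hy⟩
    apply hS.2 u hu v hv huv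
    ext y
    simp only [Set.mem_inter_iff, mem_neighborSet]
    constructor
    · rintro ⟨hadj, hyS⟩
      refine ⟨?_, hyS⟩
      rw [key v hv y hyS, ← heq, ← key u hu y hyS]
      exact hadj
    · rintro ⟨hadj, hyS⟩
      refine ⟨?_, hyS⟩
      rw [key u hu y hyS, heq, ← key v hv y hyS]
      exact hadj

end GraphPart

set_option linter.unusedSectionVars false

theorem stmt17 :
    ¬ ∃ (V : Type) (_ : Fintype V) (G : SimpleGraph V) (U W : Set V) (r s : ℕ),
      G.Connected ∧ bipartiteWith G U W ∧ U.ncard = r ∧ W.ncard = s ∧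
      r ≤ s ∧ 4 ≤ r + s ∧ ldNum Gᶜ = ldNum G + 1 ∧
      3 * r ≤ 2 * s ∧ 2 * s < 3 * r + 2 := by
  rintro ⟨V, fV, G, U, W, r, s, hconn, ⟨hUW, hdisj, hbi⟩, hU, hW, hrs, hn4, hld, h3r, h2s⟩
  classical
  -- basic facts
  have memUW : ∀ v : V, v ∈ U ∨ v ∈ W := by
    intro v
    have : v ∈ U ∪ W := hUW ▸ Set.mem_univ v
    exact this
  have hdisj' : ∀ {v : V}, v ∈ U → v ∈ W → False := by
    intro v hvU hvW
    exact Set.disjoint_left.mp hdisj hvU hvW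
  have stableU : ∀ {a b : V}, a ∈ U → b ∈ U → ¬ G.Adj a b := by
    intro a b ha hb hadj
    rcases hbi hadj with ⟨_, h2⟩ | ⟨h1, _⟩
    · exact hdisj' hb h2
    · exact hdisj' ha h1
  have stableW : ∀ {a b : V}, a ∈ W → b ∈ W → ¬ G.Adj a b := by
    intro a b ha hb hadj
    rcases hbi hadj with ⟨h1, _⟩ | ⟨_, h2⟩
    · exact hdisj' h1 ha
    · exact hdisj' h2 hb
  have NsubW : ∀ {a b : V}, a ∈ U → G.Adj a b → b ∈ W := by
    intro a b ha hadj
    rcases hbi hadj with ⟨_, h2⟩ | ⟨h1, _⟩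
    · exact h2
    · exact absurd ha (fun hc => hdisj' hc h1)
  have NsubU : ∀ {a b : V}, a ∈ W → G.Adj a b → b ∈ U := by
    intro a b ha hadj
    rcases hbi hadj with ⟨h1, _⟩ | ⟨_, h2⟩
    · exact absurd h1 (fun hc => hdisj' hc ha)
    · exact h2
  have hr2 : 2 ≤ r := by omega
  have hs2 : 2 ≤ s := by omega
  -- minimum LD-set of G
  obtain ⟨S, hS_LD, hS_card⟩ := ldNum_exists G
  have hminc : ∀ T : Set V, isLDSet Gᶜ T → ldNum G + 1 ≤ T.ncard := by
    intro T hT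
    rw [← hld]
    exact ldNum_le Gᶜ hT
  have hSnot : ¬ isLDSet Gᶜ S := by
    intro h
    have := hminc S h
    omega
  obtain ⟨v0, hv0S, hv0⟩ : ∃ v ∉ S, S ⊆ G.neighborSet v := by
    by_contra hc
    push_neg at hc
    exact hSnot (ld_compl_of_no_full G hS_LD hc)
  -- S = U or S = W
  have hcase : (S = W ∧ v0 ∈ U) ∨ (S = U ∧ v0 ∈ W) := by
    rcases memUW v0 with hv0U | hv0W
    · left
      have hSW : S ⊆ W := fun y hy => NsubW hv0U (hv0 hy)
      have hWS : W ⊆ S := by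
        intro w hw
        by_contra hwS
        obtain ⟨u, huS, hadj⟩ := hS_LD.1 w hwS
        exact stableW hw (hSW huS) hadj
      exact ⟨Set.Subset.antisymm hSW hWS, hv0U⟩
    · right
      have hSU : S ⊆ U := fun y hy => NsubU hv0W (hv0 hy)
      have hUS : U ⊆ S := by
        intro u hu
        by_contra huS
        obtain ⟨x, hxS, hadj⟩ := hS_LD.1 u huS
        exact stableU hu (hSU hxS) hadj
      exact ⟨Set.Subset.antisymm hSU hUS, hv0W⟩
  rcases hcase with ⟨hSeq, hv0U⟩ | ⟨hSeq, hv0W⟩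
  · -- CASE II : S = W, v0 = v* ∈ U adjacent to all of W
    rw [hSeq] at hS_card hS_LD hv0S hv0
    have hldG : ldNum G = s := by rw [← hS_card, hW]
    have hadjall : ∀ w ∈ W, G.Adj v0 w := fun w hw => hv0 hw
    have hNinj : ∀ {u u' : V}, u ∈ U → u' ∈ U → u ≠ u' →
        G.neighborSet u ≠ G.neighborSet u' := by
      intro u u' hu hu' hne
      have h1 : G.neighborSet u ∩ W = G.neighborSet u := by
        ext y
        simp only [Set.mem_inter_iff, mem_neighborSet, and_iff_left_iff_imp]
        intro hadj
        exact NsubW hu hadj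
      have h2 : G.neighborSet u' ∩ W = G.neighborSet u' := by
        ext y
        simp only [Set.mem_inter_iff, mem_neighborSet, and_iff_left_iff_imp]
        intro hadj
        exact NsubW hu' hadj
      have := hS_LD.2 u (fun hc => hdisj' hu hc) u' (fun hc => hdisj' hu' hc) hne
      rw [h1, h2] at this
      exact this
    -- for every w0 ∈ W there is a pair
    have pair : ∀ w0 ∈ W, ∃ u u', u ∈ U ∧ u' ∈ U ∧ u ≠ v0 ∧ u' ≠ v0 ∧ u ≠ u' ∧
        G.neighborSet u \ {w0} = G.neighborSet u' \ {w0} := by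
      intro w0 hw0
      by_contra hc
      push_neg at hc
      set T : Set V := {v0} ∪ (W \ {w0}) with hT
      have hv0T : v0 ∈ T := Or.inl rfl
      have hWT : ∀ {w : V}, w ∈ W → w ≠ w0 → w ∈ T := fun hw hne => Or.inr ⟨hw, hne⟩
      have hclass : ∀ {a : V}, a ∉ T → a = w0 ∨ (a ∈ U ∧ a ≠ v0) := by
        intro a ha
        rcases memUW a with haU | haW
        · exact Or.inr ⟨haU, fun hc => ha (hc ▸ hv0T)⟩
        · by_cases haw : a = w0
          · exact Or.inl haw
          · exact absurd (hWT haW haw) ha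
      have hTLD : isLDSet Gᶜ T := by
        constructor
        · intro v hv
          rcases hclass hv with heq | ⟨hvU, hvne⟩
          · rw [heq]
            obtain ⟨w1, hw1⟩ : (W \ {w0}).Nonempty := by
              apply Set.nonempty_of_ncard_ne_zero
              rw [Set.ncard_diff_singleton_of_mem hw0, hW]
              omega
            refine ⟨w1, Or.inr hw1, ?_⟩
            rw [compl_adj]
            exact ⟨fun h => hw1.2 (h ▸ rfl), fun h => stableW hw0 hw1.1 h⟩
          · refine ⟨v0, hv0T, ?_⟩
            rw [compl_adj]
            exact ⟨hvne, stableU hvU hv0U⟩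
        · intro a ha b hb hab
          -- helper: distinguish by an element
          have distinct : ∀ {p q x : V}, x ∈ T → Gᶜ.Adj q x → ¬ Gᶜ.Adj p x →
              Gᶜ.neighborSet p ∩ T ≠ Gᶜ.neighborSet q ∩ T := by
            intro p q x hxT hqx hpx heq
            have hmm : x ∈ Gᶜ.neighborSet q ∩ T := ⟨hqx, hxT⟩
            rw [← heq] at hmm
            exact hpx hmm.1
          have distinct' : ∀ {p q x : V}, x ∈ T → Gᶜ.Adj p x → ¬ Gᶜ.Adj q x →
              Gᶜ.neighborSet p ∩ T ≠ Gᶜ.neighborSet q ∩ T := by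
            intro p q x hxT hpx hqx heq
            have hmm : x ∈ Gᶜ.neighborSet p ∩ T := ⟨hpx, hxT⟩
            rw [heq] at hmm
            exact hqx hmm.1
          rcases hclass ha with heqa | ⟨haU, hane⟩
          · rcases hclass hb with heqb | ⟨hbU, hbne⟩
            · exact absurd (heqa.trans heqb.symm) hab
            · -- a = w0, b ∈ U
              rw [heqa]
              apply distinct hv0T
              · rw [compl_adj]
                exact ⟨hbne, stableU hbU hv0U⟩
              · rw [compl_adj]
                push_neg
                intro _
                exact (hadjall w0 hw0).symm
          · rcases hclass hb with heqb | ⟨hbU, hbne⟩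
            · -- a ∈ U, b = w0
              rw [heqb]
              apply distinct' hv0T
              · rw [compl_adj]
                exact ⟨hane, stableU haU hv0U⟩
              · rw [compl_adj]
                push_neg
                intro _
                exact (hadjall w0 hw0).symm
            · -- both in U
              have hdiffne := hc a b haU hbU hane hbne hab
              obtain ⟨y, hy⟩ := set_ne_elim' hdiffne
              rcases hy with ⟨⟨hyNa, hynw0⟩, hyn⟩ | ⟨⟨hyNb, hynw0⟩, hyn⟩
              · have hyW : y ∈ W := NsubW haU hyNa
                have hyT : y ∈ T := hWT hyW hynw0
                have hynNb : y ∉ G.neighborSet b := fun hyb => hyn ⟨hyb, hynw0⟩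
                apply distinct hyT
                · rw [compl_adj]
                  exact ⟨fun hcc => hdisj' hbU (hcc ▸ hyW), fun hcc => hynNb hcc⟩
                · rw [compl_adj]
                  push_neg
                  intro _
                  exact hyNa
              · have hyW : y ∈ W := NsubW hbU hyNb
                have hyT : y ∈ T := hWT hyW hynw0
                have hynNa : y ∉ G.neighborSet a := fun hya => hyn ⟨hya, hynw0⟩
                apply distinct' hyT
                · rw [compl_adj]
                  exact ⟨fun hcc => hdisj' haU (hcc ▸ hyW), fun hcc => hynNa hcc⟩
                · rw [compl_adj]
                  push_neg
                  intro _
                  exact hyNb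
      have hTcard : T.ncard = s := by
        rw [hT, Set.ncard_union_eq (by
          simp only [Set.disjoint_singleton_left, Set.mem_diff]
          intro hcc
          exact hv0S hcc.1)]
        rw [Set.ncard_singleton, Set.ncard_diff_singleton_of_mem hw0, hW]
        omega
      have := hminc T hTLD
      rw [hTcard, hldG] at this
      omega
    -- span argument
    set χ : V → (V → ZMod 2) := fun a y => if G.Adj a y then 1 else 0 with hχ
    set P : Finset V := (Set.toFinite (U \ {v0})).toFinset with hP
    set T' : Finset (V → ZMod 2) := P.image χ with hT'
    set W' : Finset V := (Set.toFinite W).toFinset with hW'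
    have hspan : ∀ w ∈ W', Pi.single w (1 : ZMod 2) ∈
        Submodule.span (ZMod 2) (T' : Set (V → ZMod 2)) := by
      intro w0 hw0'
      have hw0 : w0 ∈ W := by
        rw [hW'] at hw0'
        exact (Set.Finite.mem_toFinset _).mp hw0'
      obtain ⟨u, u', huU, hu'U, hunv, hu'nv, huu', hdiff⟩ := pair w0 hw0
      have hNne : G.neighborSet u ≠ G.neighborSet u' := hNinj huU hu'U huu'
      have hxor : (w0 ∈ G.neighborSet u ∧ w0 ∉ G.neighborSet u') ∨
          (w0 ∈ G.neighborSet u' ∧ w0 ∉ G.neighborSet u) := by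
        by_contra hcc
        push_neg at hcc
        apply hNne
        ext y
        by_cases hy : y = w0
        · subst hy
          exact ⟨hcc.1, hcc.2⟩
        · constructor
          · intro h1
            have hmm : y ∈ G.neighborSet u \ {w0} := ⟨h1, hy⟩
            rw [hdiff] at hmm
            exact hmm.1
          · intro h1
            have hmm : y ∈ G.neighborSet u' \ {w0} := ⟨h1, hy⟩
            rw [← hdiff] at hmm
            exact hmm.1
      have heqn : Pi.single w0 (1 : ZMod 2) = χ u + χ u' := by
        funext y
        show (Pi.single w0 1 : V → ZMod 2) y =
          (if G.Adj u y then (1 : ZMod 2) else 0) + (if G.Adj u' y then (1 : ZMod 2) else 0)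
        by_cases hy : y = w0
        · rw [hy, Pi.single_eq_same]
          rcases hxor with ⟨h1, h2⟩ | ⟨h1, h2⟩
          · have h1' : G.Adj u w0 := h1
            have h2' : ¬ G.Adj u' w0 := fun hcc => h2 hcc
            rw [if_pos h1', if_neg h2']
            decide
          · have h1' : G.Adj u' w0 := h1
            have h2' : ¬ G.Adj u w0 := fun hcc => h2 hcc
            rw [if_neg h2', if_pos h1']
            decide
        · rw [Pi.single_eq_of_ne hy]
          by_cases hadj : G.Adj u y
          · have hmem1 : y ∈ G.neighborSet u \ {w0} := ⟨hadj, hy⟩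
            rw [hdiff] at hmem1
            have h2 : G.Adj u' y := hmem1.1
            rw [if_pos hadj, if_pos h2]
            decide
          · have h2 : ¬ G.Adj u' y := by
              intro hcc
              have hmem1 : y ∈ G.neighborSet u' \ {w0} := ⟨hcc, hy⟩
              rw [← hdiff] at hmem1
              exact hadj hmem1.1
            rw [if_neg hadj, if_neg h2]
            decide
      rw [heqn]
      have hmem : ∀ {a : V}, a ∈ U → a ≠ v0 → χ a ∈ T' := by
        intro a haU hanv
        rw [hT']
        apply Finset.mem_image_of_mem
        rw [hP]
        exact (Set.Finite.mem_toFinset _).mpr ⟨haU, hanv⟩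
      exact Submodule.add_mem _ (Submodule.subset_span (hmem huU hunv))
        (Submodule.subset_span (hmem hu'U hu'nv))
    have hfinal := span_singles T' W' hspan
    have hW'card : W'.card = s := by
      rw [hW', ← Set.ncard_eq_toFinset_card, hW]
    have hT'card : T'.card ≤ r - 1 := by
      calc T'.card ≤ P.card := Finset.card_image_le
        _ = r - 1 := by
          rw [hP, ← Set.ncard_eq_toFinset_card, Set.ncard_diff_singleton_of_mem hv0U, hU]
    omega
  · -- CASE I : S = U, v0 = w* ∈ W adjacent to all of U
    rw [hSeq] at hS_card hS_LD hv0S hv0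
    have hldG : ldNum G = r := by rw [← hS_card, hU]
    have hadjallU : ∀ u ∈ U, G.Adj v0 u := fun u hu => hv0 hu
    have hNinjW : ∀ {w w' : V}, w ∈ W → w' ∈ W → w ≠ w' →
        G.neighborSet w ≠ G.neighborSet w' := by
      intro w w' hw hw' hne
      have h1 : G.neighborSet w ∩ U = G.neighborSet w := by
        ext y
        simp only [Set.mem_inter_iff, mem_neighborSet, and_iff_left_iff_imp]
        intro hadj
        exact NsubU hw hadj
      have h2 : G.neighborSet w' ∩ U = G.neighborSet w' := by
        ext y
        simp only [Set.mem_inter_iff, mem_neighborSet, and_iff_left_iff_imp]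
        intro hadj
        exact NsubU hw' hadj
      have := hS_LD.2 w (fun hc => hdisj' hc hw) w' (fun hc => hdisj' hc hw') hne
      rw [h1, h2] at this
      exact this
    -- F1
    have F1 : ∀ u0 ∈ U, ∀ w1 ∈ W, G.Adj u0 w1 → ∃ w w', w ∈ W ∧ w' ∈ W ∧
        w ≠ w1 ∧ w' ≠ w1 ∧ w ≠ w' ∧
        G.neighborSet w \ {u0} = G.neighborSet w' \ {u0} := by
      intro u0 hu0 w1 hw1 hadj01
      by_contra hc
      push_neg at hc
      set T : Set V := (U \ {u0}) ∪ {w1} with hT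
      have hw1T : w1 ∈ T := Or.inr rfl
      have hUT : ∀ {u : V}, u ∈ U → u ≠ u0 → u ∈ T := fun hu hne => Or.inl ⟨hu, hne⟩
      have hclass : ∀ {a : V}, a ∉ T → a = u0 ∨ (a ∈ W ∧ a ≠ w1) := by
        intro a ha
        rcases memUW a with haU | haW
        · by_cases hau : a = u0
          · exact Or.inl hau
          · exact absurd (hUT haU hau) ha
        · exact Or.inr ⟨haW, fun hcc => ha (hcc ▸ hw1T)⟩
      have hTLD : isLDSet Gᶜ T := by
        constructor
        · intro v hv
          rcases hclass hv with heq | ⟨hvW, hvne⟩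
          · rw [heq]
            obtain ⟨u1, hu1⟩ : (U \ {u0}).Nonempty := by
              apply Set.nonempty_of_ncard_ne_zero
              rw [Set.ncard_diff_singleton_of_mem hu0, hU]
              omega
            refine ⟨u1, Or.inl hu1, ?_⟩
            rw [compl_adj]
            exact ⟨fun h => hu1.2 (h ▸ rfl), fun h => stableU hu0 hu1.1 h⟩
          · refine ⟨w1, hw1T, ?_⟩
            rw [compl_adj]
            exact ⟨hvne, stableW hvW hw1⟩
        · intro a ha b hb hab
          have distinct : ∀ {p q x : V}, x ∈ T → Gᶜ.Adj q x → ¬ Gᶜ.Adj p x →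
              Gᶜ.neighborSet p ∩ T ≠ Gᶜ.neighborSet q ∩ T := by
            intro p q x hxT hqx hpx heq
            have hmm : x ∈ Gᶜ.neighborSet q ∩ T := ⟨hqx, hxT⟩
            rw [← heq] at hmm
            exact hpx hmm.1
          have distinct' : ∀ {p q x : V}, x ∈ T → Gᶜ.Adj p x → ¬ Gᶜ.Adj q x →
              Gᶜ.neighborSet p ∩ T ≠ Gᶜ.neighborSet q ∩ T := by
            intro p q x hxT hpx hqx heq
            have hmm : x ∈ Gᶜ.neighborSet p ∩ T := ⟨hpx, hxT⟩
            rw [heq] at hmm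
            exact hqx hmm.1
          rcases hclass ha with heqa | ⟨haW, hane⟩
          · rcases hclass hb with heqb | ⟨hbW, hbne⟩
            · exact absurd (heqa.trans heqb.symm) hab
            · -- a = u0, b ∈ W
              rw [heqa]
              apply distinct hw1T
              · rw [compl_adj]
                exact ⟨hbne, stableW hbW hw1⟩
              · rw [compl_adj]
                push_neg
                intro _
                exact hadj01
          · rcases hclass hb with heqb | ⟨hbW, hbne⟩
            · -- a ∈ W, b = u0
              rw [heqb]
              apply distinct' hw1T
              · rw [compl_adj]
                exact ⟨hane, stableW haW hw1⟩
              · rw [compl_adj]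
                push_neg
                intro _
                exact hadj01
            · -- both in W
              have hdiffne := hc a b haW hbW hane hbne hab
              obtain ⟨y, hy⟩ := set_ne_elim' hdiffne
              rcases hy with ⟨⟨hyNa, hynu0⟩, hyn⟩ | ⟨⟨hyNb, hynu0⟩, hyn⟩
              · have hyU : y ∈ U := NsubU haW hyNa
                have hyT : y ∈ T := hUT hyU hynu0
                have hynNb : y ∉ G.neighborSet b := fun hyb => hyn ⟨hyb, hynu0⟩
                apply distinct hyT
                · rw [compl_adj]
                  exact ⟨fun hcc => hdisj' (hcc ▸ hyU) hbW, fun hcc => hynNb hcc⟩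
                · rw [compl_adj]
                  push_neg
                  intro _
                  exact hyNa
              · have hyU : y ∈ U := NsubU hbW hyNb
                have hyT : y ∈ T := hUT hyU hynu0
                have hynNa : y ∉ G.neighborSet a := fun hya => hyn ⟨hya, hynu0⟩
                apply distinct' hyT
                · rw [compl_adj]
                  exact ⟨fun hcc => hdisj' (hcc ▸ hyU) haW, fun hcc => hynNa hcc⟩
                · rw [compl_adj]
                  push_neg
                  intro _
                  exact hyNb
      have hTcard : T.ncard = r := by
        rw [hT, Set.ncard_union_eq (by
          simp only [Set.disjoint_singleton_right, Set.mem_diff]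
          intro hcc
          exact hdisj' hcc.1 hw1)]
        rw [Set.ncard_singleton, Set.ncard_diff_singleton_of_mem hu0, hU]
        omega
      have := hminc T hTLD
      rw [hTcard, hldG] at this
      omega
    -- oriented version
    have orient : ∀ u0 ∈ U, ∀ w1 ∈ W, G.Adj u0 w1 → ∃ wa wb, wa ∈ W ∧ wb ∈ W ∧
        wa ≠ w1 ∧ wb ≠ w1 ∧ wa ≠ wb ∧
        G.neighborSet wa \ {u0} = G.neighborSet wb \ {u0} ∧
        u0 ∈ G.neighborSet wa ∧ u0 ∉ G.neighborSet wb := by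
      intro u0 hu0 w1 hw1 hadj01
      obtain ⟨w, w', hwW, hw'W, hwne, hw'ne, hww', hdiff⟩ := F1 u0 hu0 w1 hw1 hadj01
      have hNne : G.neighborSet w ≠ G.neighborSet w' := hNinjW hwW hw'W hww'
      have hxor : (u0 ∈ G.neighborSet w ∧ u0 ∉ G.neighborSet w') ∨
          (u0 ∈ G.neighborSet w' ∧ u0 ∉ G.neighborSet w) := by
        by_contra hcc
        push_neg at hcc
        apply hNne
        ext y
        by_cases hy : y = u0
        · rw [hy]
          exact ⟨hcc.1, hcc.2⟩
        · constructor
          · intro h1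
            have hmm : y ∈ G.neighborSet w \ {u0} := ⟨h1, hy⟩
            rw [hdiff] at hmm
            exact hmm.1
          · intro h1
            have hmm : y ∈ G.neighborSet w' \ {u0} := ⟨h1, hy⟩
            rw [← hdiff] at hmm
            exact hmm.1
      rcases hxor with ⟨h1, h2⟩ | ⟨h1, h2⟩
      · exact ⟨w, w', hwW, hw'W, hwne, hw'ne, hww', hdiff, h1, h2⟩
      · exact ⟨w', w, hw'W, hwW, hw'ne, hwne, hww'.symm, hdiff.symm, h1, h2⟩
    -- construct the quads and apply the core lemma
    haveI : Fintype ↥U := Fintype.ofFinite _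
    haveI : Fintype ↥W := Fintype.ofFinite _
    haveI : DecidableEq ↥U := Classical.decEq _
    haveI : DecidableEq ↥W := Classical.decEq _
    haveI : Nonempty ↥U := by
      apply Set.Nonempty.to_subtype
      apply Set.nonempty_of_ncard_ne_zero
      omega
    set g : ↥W → ↥U → ZMod 2 := fun w u => if G.Adj ↑w ↑u then 1 else 0 with hg
    have hginj : ∀ {w w' : ↥W}, G.neighborSet ↑w ≠ G.neighborSet ↑w' → g w ≠ g w' := by
      intro w w' hNne heq
      apply hNne
      ext y
      constructor
      · intro h1
        have hyU : y ∈ U := NsubU w.2 h1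
        have := congrFun heq ⟨y, hyU⟩
        simp only [hg] at this
        have h1' : G.Adj ↑w y := h1
        rw [if_pos h1'] at this
        by_contra h2
        have h2' : ¬ G.Adj ↑w' y := h2
        rw [if_neg h2'] at this
        exact one_ne_zero this
      · intro h1
        have hyU : y ∈ U := NsubU w'.2 h1
        have := congrFun heq ⟨y, hyU⟩
        simp only [hg] at this
        have h1' : G.Adj ↑w' y := h1
        rw [if_pos h1'] at this
        by_contra h2
        have h2' : ¬ G.Adj ↑w y := h2
        rw [if_neg h2'] at this
        exact zero_ne_one this
    have hquads : ∀ i : ↥U, ∃ w w' x x' : ↥W,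
        g w + g w' = Pi.single i 1 ∧ g x + g x' = Pi.single i 1 ∧ g x ≠ g w ∧ g x ≠ g w' := by
      intro i
      set u0 : V := ↑i with hu0def
      have hu0U : u0 ∈ U := i.2
      have hadj00 : G.Adj u0 v0 := (hadjallU u0 hu0U).symm
      obtain ⟨wa, wb, hwaW, hwbW, _, _, hwab, hdiff1, hu0a, hu0b⟩ :=
        orient u0 hu0U v0 hv0W hadj00
      have hadj0a : G.Adj u0 wa := (hu0a : G.Adj wa u0).symm
      obtain ⟨xa, xb, hxaW, hxbW, hxawa, hxbwa, hxab, hdiff2, hu0xa, hu0xb⟩ :=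
        orient u0 hu0U wa hwaW hadj0a
      have hxawb : xa ≠ wb := fun hcc => hu0b (hcc ▸ hu0xa)
      -- the g-sum equations
      have gsum : ∀ {p q : V} (hpW : p ∈ W) (hqW : q ∈ W),
          G.neighborSet p \ {u0} = G.neighborSet q \ {u0} →
          u0 ∈ G.neighborSet p → u0 ∉ G.neighborSet q →
          g ⟨p, hpW⟩ + g ⟨q, hqW⟩ = Pi.single i 1 := by
        intro p q hpW hqW hdiff hin hout
        funext u
        show (if G.Adj p ↑u then (1 : ZMod 2) else 0) +
          (if G.Adj q ↑u then (1 : ZMod 2) else 0) = (Pi.single i 1 : ↥U → ZMod 2) u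
        by_cases hui : u = i
        · have hin' : G.Adj p ↑u := by rw [hui]; exact hin
          have hout' : ¬ G.Adj q ↑u := by rw [hui]; exact hout
          rw [hui, Pi.single_eq_same]
          rw [if_pos (by rw [← hui]; exact hin' : G.Adj p ↑i), if_neg (by rw [← hui]; exact hout' : ¬ G.Adj q ↑i)]
          decide
        · rw [Pi.single_eq_of_ne hui]
          have hyne : (↑u : V) ≠ u0 := fun hcc => hui (Subtype.ext hcc)
          by_cases hadj : G.Adj p ↑u
          · have hmm : (↑u : V) ∈ G.neighborSet p \ {u0} := ⟨hadj, hyne⟩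
            rw [hdiff] at hmm
            have hq' : G.Adj q ↑u := hmm.1
            rw [if_pos hadj, if_pos hq']
            decide
          · have h2 : ¬ G.Adj q ↑u := by
              intro hcc
              have hmm : (↑u : V) ∈ G.neighborSet q \ {u0} := ⟨hcc, hyne⟩
              rw [← hdiff] at hmm
              exact hadj hmm.1
            rw [if_neg hadj, if_neg h2]
            decide
      refine ⟨⟨wa, hwaW⟩, ⟨wb, hwbW⟩, ⟨xa, hxaW⟩, ⟨xb, hxbW⟩,
        gsum hwaW hwbW hdiff1 hu0a hu0b,
        gsum hxaW hxbW hdiff2 hu0xa hu0xb, ?_, ?_⟩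
      · exact hginj (hNinjW hxaW hwaW hxawa)
      · exact hginj (hNinjW hxaW hwbW hxawb)
    have hcore := core g hquads
    have hcardU : Fintype.card ↥U = r := by
      rw [← Nat.card_eq_fintype_card, Nat.card_coe_set_eq, hU]
    have hcardW : Fintype.card ↥W = s := by
      rw [← Nat.card_eq_fintype_card, Nat.card_coe_set_eq, hW]
    rw [hcardU, hcardW] at hcore
    omega
end

section
/- For every pair of natural numbers (r,s) with 3 ≤ r and 3r/2 + 1 ≤ s ≤ 2^r − 1 (i.e., 3r + 2 ≤ 2s and s ≤ 2^r − 1), there exists a connected bipartite graph G with stable sets U and W, |U| = r and |W| = s, such that λ(Ḡ) = λ(G) + 1. -/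
open SimpleGraph

namespace Stmt18

variable {r : ℕ}

/-- adjacency on `Fin r ⊕ ↥𝒲` : a left vertex `i` is adjacent to
a right vertex `w` iff `i ∈ w`. -/
def adjFn (𝒲 : Set (Set (Fin r))) : (Fin r ⊕ ↥𝒲) → (Fin r ⊕ ↥𝒲) → Prop
  | .inl i, .inr w => i ∈ w.1
  | .inr w, .inl i => i ∈ w.1
  | _, _ => False

/-- The bipartite graph determined by the family `𝒲` of subsets of `Fin r`. -/
def gr (𝒲 : Set (Set (Fin r))) : SimpleGraph (Fin r ⊕ ↥𝒲) where
  Adj := adjFn 𝒲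
  symm := ⟨by rintro (i | w) (j | w') h <;> first | exact h | cases h⟩
  loopless := ⟨by rintro (i | w) h <;> cases h⟩

variable {𝒲 : Set (Set (Fin r))}

@[simp] lemma gr_adj_inl_inr {i : Fin r} {w : ↥𝒲} :
    (gr 𝒲).Adj (Sum.inl i) (Sum.inr w) ↔ i ∈ w.1 := Iff.rfl

@[simp] lemma gr_adj_inr_inl {i : Fin r} {w : ↥𝒲} :
    (gr 𝒲).Adj (Sum.inr w) (Sum.inl i) ↔ i ∈ w.1 := Iff.rfl

@[simp] lemma gr_adj_inl_inl {i j : Fin r} :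
    ¬ (gr 𝒲).Adj (Sum.inl i) (Sum.inl j) := fun h => h

@[simp] lemma gr_adj_inr_inr {w w' : ↥𝒲} :
    ¬ (gr 𝒲).Adj (Sum.inr w) (Sum.inr w') := fun h => h

/-- the "separating" property extracted from an LD-set (of `gr 𝒲` or of its
complement): distinct right vertices outside `T` have distinct traces on `T`. -/
def SepT (𝒲 : Set (Set (Fin r))) (T : Set (Fin r ⊕ ↥𝒲)) : Prop :=
  ∀ w w' : ↥𝒲, Sum.inr w ∉ T → Sum.inr w' ∉ T → w ≠ w' →
    w.1 ∩ {i : Fin r | Sum.inl i ∈ T} ≠ w'.1 ∩ {i : Fin r | Sum.inl i ∈ T}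

lemma sep_of_ld {T : Set (Fin r ⊕ ↥𝒲)} (h : isLDSet (gr 𝒲) T) : SepT 𝒲 T := by
  intro w w' hw hw' hne heq
  apply h.2 (Sum.inr w) hw (Sum.inr w') hw'
    (fun hh => hne (Sum.inr_injective hh))
  ext v
  cases v with
  | inl i =>
      have hi := Set.ext_iff.1 heq i
      simp only [Set.mem_inter_iff, Set.mem_setOf_eq] at hi
      simp only [Set.mem_inter_iff, SimpleGraph.mem_neighborSet, gr_adj_inr_inl]
      tauto
  | inr w'' =>
      simp only [Set.mem_inter_iff, SimpleGraph.mem_neighborSet]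
      simp

lemma sep_of_ld_compl {T : Set (Fin r ⊕ ↥𝒲)} (h : isLDSet (gr 𝒲)ᶜ T) :
    SepT 𝒲 T := by
  intro w w' hw hw' hne heq
  apply h.2 (Sum.inr w) hw (Sum.inr w') hw'
    (fun hh => hne (Sum.inr_injective hh))
  ext v
  cases v with
  | inl i =>
      have hi := Set.ext_iff.1 heq i
      simp only [Set.mem_inter_iff, Set.mem_setOf_eq] at hi
      simp only [Set.mem_inter_iff, SimpleGraph.mem_neighborSet, compl_adj,
        gr_adj_inr_inl]
      constructor
      · rintro ⟨⟨-, hnadj⟩, hT⟩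
        exact ⟨⟨by simp, fun hmem => hnadj (by tauto)⟩, hT⟩
      · rintro ⟨⟨-, hnadj⟩, hT⟩
        exact ⟨⟨by simp, fun hmem => hnadj (by tauto)⟩, hT⟩
  | inr w'' =>
      simp only [Set.mem_inter_iff, SimpleGraph.mem_neighborSet, compl_adj]
      constructor
      · rintro ⟨-, hT⟩
        refine ⟨⟨fun hh => hw' (hh ▸ hT), fun hh => hh⟩, hT⟩
      · rintro ⟨-, hT⟩
        refine ⟨⟨fun hh => hw (hh ▸ hT), fun hh => hh⟩, hT⟩

section Main

variable {T : Set (Fin r ⊕ ↥𝒲)}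

/-- The key counting consequence of separation: at least as many right
vertices inside `T` as left vertices outside `T`. -/
lemma sep_ncard (hfull : (Set.univ : Set (Fin r)) ∈ 𝒲)
    (hco : ∀ i : Fin r, ({i}ᶜ : Set (Fin r)) ∈ 𝒲)
    (hsep : SepT 𝒲 T) :
    {i : Fin r | Sum.inl i ∉ T}.ncard ≤ {w : ↥𝒲 | Sum.inr w ∈ T}.ncard := by
  classical
  set C : Set (Fin r) := {i : Fin r | Sum.inl i ∈ T} with hC
  set I : Set (Fin r) := {i : Fin r | Sum.inl i ∉ T} with hI
  set A : Set ↥𝒲 := {w : ↥𝒲 | Sum.inr w ∈ T} with hA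
  set cw : Fin r → ↥𝒲 := fun i => ⟨({i}ᶜ : Set (Fin r)), hco i⟩ with hcw
  set fw : ↥𝒲 := ⟨(Set.univ : Set (Fin r)), hfull⟩ with hfw
  have hcw_inj : Function.Injective cw := by
    intro i j hij
    have : ({i}ᶜ : Set (Fin r)) = {j}ᶜ := congrArg Subtype.val hij
    have h2 : ({i} : Set (Fin r)) = {j} := by
      rw [← compl_compl ({i} : Set (Fin r)), this, compl_compl]
    exact Set.singleton_eq_singleton_iff.1 h2
  have hcw_ne_fw : ∀ i, cw i ≠ fw := by
    intro i hif
    have : ({i}ᶜ : Set (Fin r)) = Set.univ := congrArg Subtype.val hif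
    have : (i : Fin r) ∈ ({i}ᶜ : Set (Fin r)) := this ▸ Set.mem_univ i
    simp at this
  have tr_cw : ∀ i ∈ I, (cw i).1 ∩ C = C := by
    intro i hi
    ext j
    simp only [hcw, Set.mem_inter_iff, Set.mem_compl_iff, Set.mem_singleton_iff]
    constructor
    · tauto
    · intro hj
      refine ⟨fun hji => ?_, hj⟩
      exact hi (hji ▸ hj)
  have tr_fw : fw.1 ∩ C = C := Set.univ_inter C
  have dichot : ∀ i ∈ I, Sum.inr (cw i) ∈ T ∨ Sum.inr fw ∈ T := by
    intro i hi
    by_contra hcon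
    push_neg at hcon
    exact hsep (cw i) fw hcon.1 hcon.2 (hcw_ne_fw i)
      (((tr_cw i hi).trans tr_fw.symm))
  set g : Fin r → ↥𝒲 := fun i => if Sum.inr (cw i) ∈ T then cw i else fw with hg
  have hmaps : ∀ i ∈ I, g i ∈ A := by
    intro i hi
    simp only [hg]
    split_ifs with hmem
    · exact hmem
    · rcases dichot i hi with hh | hh
      · exact absurd hh hmem
      · exact hh
  have hinj : Set.InjOn g I := by
    intro i hi j hj hij
    by_contra hne
    simp only [hg] at hij
    split_ifs at hij with h1 h2 h2
    · exact hne (hcw_inj hij)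
    · exact hcw_ne_fw i hij
    · exact hcw_ne_fw j hij.symm
    · exact hsep (cw i) (cw j) h1 h2 (fun hh => hne (hcw_inj hh))
        (((tr_cw i hi).trans (tr_cw j hj).symm))
  exact Set.ncard_le_ncard_of_injOn g hmaps hinj (Set.toFinite A)

/-- The main combinatorial lemma: a separating set for the complement graph
cannot have as few right vertices inside as left vertices outside
(when some left vertex is outside). -/
lemma sep_ncard_succ (hr : 3 ≤ r)
    (hfull : (Set.univ : Set (Fin r)) ∈ 𝒲)
    (hco : ∀ i : Fin r, ({i}ᶜ : Set (Fin r)) ∈ 𝒲)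
    (hpair : ∀ i : Fin r, ∃ j, j ≠ i ∧ ({i, j}ᶜ : Set (Fin r)) ∈ 𝒲)
    (hsep : SepT 𝒲 T)
    (hIne : {i : Fin r | Sum.inl i ∉ T}.Nonempty)
    (hA_le : {w : ↥𝒲 | Sum.inr w ∈ T}.ncard ≤ {i : Fin r | Sum.inl i ∉ T}.ncard) :
    False := by
  classical
  set C : Set (Fin r) := {i : Fin r | Sum.inl i ∈ T} with hC
  set I : Set (Fin r) := {i : Fin r | Sum.inl i ∉ T} with hI
  set A : Set ↥𝒲 := {w : ↥𝒲 | Sum.inr w ∈ T} with hA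
  set cw : Fin r → ↥𝒲 := fun i => ⟨({i}ᶜ : Set (Fin r)), hco i⟩ with hcw
  set fw : ↥𝒲 := ⟨(Set.univ : Set (Fin r)), hfull⟩ with hfw
  have hcw_inj : Function.Injective cw := by
    intro i j hij
    have : ({i}ᶜ : Set (Fin r)) = {j}ᶜ := congrArg Subtype.val hij
    have h2 : ({i} : Set (Fin r)) = {j} := by
      rw [← compl_compl ({i} : Set (Fin r)), this, compl_compl]
    exact Set.singleton_eq_singleton_iff.1 h2
  have hcw_ne_fw : ∀ i, cw i ≠ fw := by
    intro i hif
    have : ({i}ᶜ : Set (Fin r)) = Set.univ := congrArg Subtype.val hif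
    have : (i : Fin r) ∈ ({i}ᶜ : Set (Fin r)) := this ▸ Set.mem_univ i
    simp at this
  have tr_cw : ∀ i ∈ I, (cw i).1 ∩ C = C := by
    intro i hi
    ext j
    simp only [hcw, Set.mem_inter_iff, Set.mem_compl_iff, Set.mem_singleton_iff]
    constructor
    · tauto
    · intro hj
      refine ⟨fun hji => ?_, hj⟩
      exact hi (hji ▸ hj)
  have tr_fw : fw.1 ∩ C = C := Set.univ_inter C
  have dichot : ∀ i ∈ I, Sum.inr (cw i) ∈ T ∨ Sum.inr fw ∈ T := by
    intro i hi
    by_contra hcon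
    push_neg at hcon
    exact hsep (cw i) fw hcon.1 hcon.2 (hcw_ne_fw i)
      (((tr_cw i hi).trans tr_fw.symm))
  set g : Fin r → ↥𝒲 := fun i => if Sum.inr (cw i) ∈ T then cw i else fw with hg
  have hmaps : ∀ i ∈ I, g i ∈ A := by
    intro i hi
    simp only [hg]
    split_ifs with hmem
    · exact hmem
    · rcases dichot i hi with hh | hh
      · exact absurd hh hmem
      · exact hh
  have hinj : Set.InjOn g I := by
    intro i hi j hj hij
    by_contra hne
    simp only [hg] at hij
    split_ifs at hij with h1 h2 h2
    · exact hne (hcw_inj hij)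
    · exact hcw_ne_fw i hij
    · exact hcw_ne_fw j hij.symm
    · exact hsep (cw i) (cw j) h1 h2 (fun hh => hne (hcw_inj hh))
        (((tr_cw i hi).trans (tr_cw j hj).symm))
  have himg_sub : g '' I ⊆ A := by
    rintro _ ⟨i, hi, rfl⟩; exact hmaps i hi
  have himg : g '' I = A :=
    Set.eq_of_subset_of_ncard_le himg_sub
      (by rw [Set.ncard_image_of_injOn hinj]; exact hA_le) (Set.toFinite A)
  -- membership characterizations
  have hcwA : ∀ j : Fin r, j ∉ I → Sum.inr (cw j) ∉ T := by
    intro j hj hmem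
    have : cw j ∈ A := hmem
    rw [← himg] at this
    obtain ⟨i, hi, hgi⟩ := this
    simp only [hg] at hgi
    split_ifs at hgi with h1
    · exact hj (hcw_inj hgi ▸ hi)
    · exact hcw_ne_fw j hgi.symm
  -- the pair through a chosen element of I
  obtain ⟨i1, hi1⟩ := hIne
  obtain ⟨j, hji, hmem⟩ := hpair i1
  set m : ↥𝒲 := ⟨({i1, j}ᶜ : Set (Fin r)), hmem⟩ with hm
  have hpair_ne_single : ∀ l : Fin r, ({i1, j} : Set (Fin r)) ≠ {l} := by
    intro l hl
    have h1 : i1 ∈ ({l} : Set (Fin r)) := hl ▸ (by simp)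
    have h2 : j ∈ ({l} : Set (Fin r)) := hl ▸ (by simp)
    simp only [Set.mem_singleton_iff] at h1 h2
    exact hji (h2.trans h1.symm)
  have hm_ne_cw : ∀ l : Fin r, m ≠ cw l := by
    intro l hml
    have : ({i1, j}ᶜ : Set (Fin r)) = {l}ᶜ := congrArg Subtype.val hml
    have h2 : ({i1, j} : Set (Fin r)) = {l} := by
      rw [← compl_compl ({i1, j} : Set (Fin r)), this, compl_compl]
    exact hpair_ne_single l h2
  have hm_ne_fw : m ≠ fw := by
    intro hmf
    have : ({i1, j}ᶜ : Set (Fin r)) = Set.univ := congrArg Subtype.val hmf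
    have : (i1 : Fin r) ∈ ({i1, j}ᶜ : Set (Fin r)) := this ▸ Set.mem_univ i1
    simp at this
  have hmT : Sum.inr m ∉ T := by
    intro hmem'
    have : m ∈ A := hmem'
    rw [← himg] at this
    obtain ⟨i, hi, hgi⟩ := this
    simp only [hg] at hgi
    split_ifs at hgi with h1
    · exact hm_ne_cw i hgi.symm
    · exact hm_ne_fw hgi.symm
  -- find x outside T with full trace, different from m
  have hx : ∃ x : ↥𝒲, Sum.inr x ∉ T ∧ x.1 ∩ C = C ∧ x ≠ m := by
    by_cases hfwA : Sum.inr fw ∈ T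
    · have : fw ∈ A := hfwA
      rw [← himg] at this
      obtain ⟨i0, hi0, hg0⟩ := this
      simp only [hg] at hg0
      split_ifs at hg0 with h1
      · exact absurd hg0 (hcw_ne_fw i0)
      · exact ⟨cw i0, h1, tr_cw i0 hi0, fun hh => hm_ne_cw i0 hh.symm⟩
    · exact ⟨fw, hfwA, tr_fw, fun hh => hm_ne_fw hh.symm⟩
  obtain ⟨x, hxT, hxC, hxm⟩ := hx
  have hi1C : i1 ∉ C := hi1
  by_cases hjC : j ∈ C
  · -- m collides with cw j
    have hjI : j ∉ I := by
      intro hjI'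
      exact hjI' hjC
    have hcwjT : Sum.inr (cw j) ∉ T := hcwA j hjI
    apply hsep m (cw j) hmT hcwjT (hm_ne_cw j)
    ext i
    simp only [hm, hcw, Set.mem_inter_iff, Set.mem_compl_iff, Set.mem_insert_iff,
      Set.mem_singleton_iff]
    constructor
    · rintro ⟨hni, hiC⟩
      push_neg at hni
      exact ⟨hni.2, hiC⟩
    · rintro ⟨hnij, hiC⟩
      refine ⟨?_, hiC⟩
      push_neg
      exact ⟨fun hii1 => hi1C (hii1 ▸ hiC), hnij⟩
  · -- m collides with x
    apply hsep m x hmT hxT (fun hh => hxm hh.symm)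
    rw [hxC]
    ext i
    simp only [hm, Set.mem_inter_iff, Set.mem_compl_iff, Set.mem_insert_iff,
      Set.mem_singleton_iff]
    constructor
    · rintro ⟨-, hiC⟩
      exact hiC
    · intro hiC
      refine ⟨?_, hiC⟩
      push_neg
      exact ⟨fun hii1 => hi1C (hii1 ▸ hiC), fun hij => hjC (hij ▸ hiC)⟩

/-- decomposition of the cardinality of a set of vertices. -/
lemma T_decomp (T : Set (Fin r ⊕ ↥𝒲)) :
    T.ncard = {i : Fin r | Sum.inl i ∈ T}.ncard + {w : ↥𝒲 | Sum.inr w ∈ T}.ncard := by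
  classical
  have hT : T = (Sum.inl '' {i : Fin r | Sum.inl i ∈ T}) ∪
      (Sum.inr '' {w : ↥𝒲 | Sum.inr w ∈ T}) := by
    ext x
    cases x with
    | inl i => simp
    | inr w => simp
  have hdis : Disjoint (Sum.inl '' {i : Fin r | Sum.inl i ∈ T})
      (Sum.inr '' {w : ↥𝒲 | Sum.inr w ∈ T}) := by
    rw [Set.disjoint_left]
    rintro _ ⟨i, hi, rfl⟩ ⟨w, hw, hcon⟩
    exact Sum.inl_ne_inr hcon.symm
  conv_lhs => rw [hT]
  rw [Set.ncard_union_eq hdis (Set.toFinite _) (Set.toFinite _),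
    Set.ncard_image_of_injective _ Sum.inl_injective,
    Set.ncard_image_of_injective _ Sum.inr_injective]

lemma card_split (T : Set (Fin r ⊕ ↥𝒲)) :
    {i : Fin r | Sum.inl i ∈ T}.ncard + {i : Fin r | Sum.inl i ∉ T}.ncard = r := by
  have h := Set.ncard_add_ncard_compl {i : Fin r | Sum.inl i ∈ T}
  have hc : ({i : Fin r | Sum.inl i ∈ T}ᶜ : Set (Fin r)) = {i : Fin r | Sum.inl i ∉ T} := by
    ext i; simp
  rw [hc] at h
  rw [h, Nat.card_eq_fintype_card, Fintype.card_fin]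

lemma lower_G (hfull : (Set.univ : Set (Fin r)) ∈ 𝒲)
    (hco : ∀ i : Fin r, ({i}ᶜ : Set (Fin r)) ∈ 𝒲)
    (h : isLDSet (gr 𝒲) T) : r ≤ T.ncard := by
  have hsep := sep_of_ld h
  have h1 := sep_ncard hfull hco hsep
  have h2 := T_decomp T
  have h3 := card_split T
  omega

lemma lower_Gc (hr : 3 ≤ r)
    (hfull : (Set.univ : Set (Fin r)) ∈ 𝒲)
    (hco : ∀ i : Fin r, ({i}ᶜ : Set (Fin r)) ∈ 𝒲)
    (hpair : ∀ i : Fin r, ∃ j, j ≠ i ∧ ({i, j}ᶜ : Set (Fin r)) ∈ 𝒲)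
    (h : isLDSet (gr 𝒲)ᶜ T) : r + 1 ≤ T.ncard := by
  have hsep := sep_of_ld_compl h
  have h2 := T_decomp T
  have h3 := card_split T
  by_contra hcon
  push_neg at hcon
  rcases Set.eq_empty_or_nonempty {i : Fin r | Sum.inl i ∉ T} with hI | hI
  · -- all left vertices in T; then no right vertex in T, and `fw` is undominated
    have hCr : {i : Fin r | Sum.inl i ∈ T}.ncard = r := by
      rw [hI] at h3; simpa using h3
    have hA0 : {w : ↥𝒲 | Sum.inr w ∈ T}.ncard = 0 := by omega
    have hAe : {w : ↥𝒲 | Sum.inr w ∈ T} = ∅ := by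
      rcases Set.eq_empty_or_nonempty {w : ↥𝒲 | Sum.inr w ∈ T} with he | hne
      · exact he
      · exact absurd hA0 (hne.ncard_pos (Set.toFinite _)).ne'
    set fw : ↥𝒲 := ⟨(Set.univ : Set (Fin r)), hfull⟩ with hfw
    have hfwT : Sum.inr fw ∉ T := by
      intro hmem
      have : fw ∈ ({w : ↥𝒲 | Sum.inr w ∈ T} : Set ↥𝒲) := hmem
      rw [hAe] at this
      exact this
    obtain ⟨u, huT, hadj⟩ := h.1 (Sum.inr fw) hfwT
    cases u with
    | inl i =>
        rw [compl_adj] at hadj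
        exact hadj.2 (by simp [hfw])
    | inr w =>
        have : w ∈ ({w : ↥𝒲 | Sum.inr w ∈ T} : Set ↥𝒲) := huT
        rw [hAe] at this
        exact this
  · have hA_le : {w : ↥𝒲 | Sum.inr w ∈ T}.ncard ≤ {i : Fin r | Sum.inl i ∉ T}.ncard := by
      omega
    exact sep_ncard_succ hr hfull hco hpair hsep hI hA_le

end Main

/-- `U = range Sum.inl` is an LD-set of `gr 𝒲`. -/
lemma ld_left (hne : ∀ w : ↥𝒲, w.1.Nonempty) :
    isLDSet (gr 𝒲) (Set.range Sum.inl) := by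
  constructor
  · intro v hv
    cases v with
    | inl i => exact absurd ⟨i, rfl⟩ hv
    | inr w =>
        obtain ⟨i, hi⟩ := hne w
        exact ⟨Sum.inl i, ⟨i, rfl⟩, hi⟩
  · intro u hu v hv huv heq
    cases u with
    | inl i => exact absurd ⟨i, rfl⟩ hu
    | inr w =>
      cases v with
      | inl i => exact absurd ⟨i, rfl⟩ hv
      | inr w' =>
          apply huv
          have hval : w.1 = w'.1 := by
            ext i
            have hi := Set.ext_iff.1 heq (Sum.inl i)
            simp only [Set.mem_inter_iff, SimpleGraph.mem_neighborSet,
              gr_adj_inr_inl, Set.mem_range] at hi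
            constructor
            · intro hmem
              exact (hi.1 ⟨hmem, ⟨i, rfl⟩⟩).1
            · intro hmem
              exact (hi.2 ⟨hmem, ⟨i, rfl⟩⟩).1
          exact congrArg Sum.inr (Subtype.ext hval)

/-- `U ∪ {fw}` is an LD-set of the complement of `gr 𝒲`. -/
lemma ld_left_compl (hfull : (Set.univ : Set (Fin r)) ∈ 𝒲) :
    isLDSet (gr 𝒲)ᶜ
      (Set.range Sum.inl ∪ {Sum.inr (⟨Set.univ, hfull⟩ : ↥𝒲)}) := by
  set fw : ↥𝒲 := ⟨(Set.univ : Set (Fin r)), hfull⟩ with hfw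
  constructor
  · intro v hv
    simp only [Set.mem_union, Set.mem_range, Set.mem_singleton_iff, not_or] at hv
    cases v with
    | inl i => exact absurd ⟨i, rfl⟩ hv.1
    | inr w =>
        refine ⟨Sum.inr fw, Or.inr rfl, ?_⟩
        rw [compl_adj]
        exact ⟨hv.2, fun hadj => hadj⟩
  · intro u hu v hv huv heq
    simp only [Set.mem_union, Set.mem_range, Set.mem_singleton_iff, not_or] at hu hv
    cases u with
    | inl i => exact absurd ⟨i, rfl⟩ hu.1
    | inr w =>
      cases v with
      | inl i => exact absurd ⟨i, rfl⟩ hv.1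
      | inr w' =>
          apply huv
          have hval : w.1 = w'.1 := by
            ext i
            have hi := Set.ext_iff.1 heq (Sum.inl i)
            simp only [Set.mem_inter_iff, SimpleGraph.mem_neighborSet, compl_adj,
              gr_adj_inr_inl, Set.mem_union, Set.mem_range, Set.mem_singleton_iff] at hi
            by_contra hcon
            by_cases hmem : i ∈ w.1
            · have h1 : i ∉ w'.1 := fun hh => hcon (by tauto)
              have := hi.2 ⟨⟨by simp, fun hh => h1 hh⟩, Or.inl ⟨i, rfl⟩⟩
              exact this.1.2 hmem
            · have h1 : i ∈ w'.1 := by tauto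
              have := hi.1 ⟨⟨by simp, fun hh => hmem hh⟩, Or.inl ⟨i, rfl⟩⟩
              exact this.1.2 h1
          exact congrArg Sum.inr (Subtype.ext hval)

lemma ldNum_eq {α : Type*} (G : SimpleGraph α) (n : ℕ)
    (hmem : ∃ S : Set α, isLDSet G S ∧ S.ncard = n)
    (hlb : ∀ S : Set α, isLDSet G S → n ≤ S.ncard) : ldNum G = n := by
  apply le_antisymm
  · exact Nat.sInf_le hmem
  · apply le_csInf ⟨n, hmem⟩
    rintro b ⟨S, hS, rfl⟩
    exact hlb S hS

end Stmt18

open Stmt18 in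
theorem stmt18 (r s : ℕ) (hr : 3 ≤ r) (h1 : 3 * r + 2 ≤ 2 * s) (h2 : s ≤ 2 ^ r - 1) :
    ∃ (V : Type) (_ : Fintype V) (G : SimpleGraph V) (U W : Set V),
      G.Connected ∧ bipartiteWith G U W ∧ U.ncard = r ∧ W.ncard = s ∧
      ldNum Gᶜ = ldNum G + 1 := by
  classical
  have hr0 : 0 < r := by omega
  -- the base family
  set co : Fin r → Set (Fin r) := fun i => ({i}ᶜ : Set (Fin r)) with hco_def
  set pm : Fin ((r + 1) / 2) → Set (Fin r) := fun k =>
    if h : 2 * k.1 + 1 < r then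
      ({⟨2 * k.1, by omega⟩, ⟨2 * k.1 + 1, h⟩} : Set (Fin r))ᶜ
    else
      ({⟨r - 2, by omega⟩, ⟨r - 1, by omega⟩} : Set (Fin r))ᶜ
    with hpm_def
  set B : Set (Set (Fin r)) :=
    {Set.univ} ∪ Set.range co ∪ Set.range pm with hB_def
  -- cardinality bound for B
  have hBcard : B.ncard ≤ 1 + r + (r + 1) / 2 := by
    rw [hB_def]
    have hu : ({Set.univ} ∪ Set.range co ∪ Set.range pm : Set (Set (Fin r))).ncard ≤
        ({Set.univ} ∪ Set.range co : Set (Set (Fin r))).ncard + (Set.range pm).ncard :=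
      Set.ncard_union_le _ _
    have hu2 : ({Set.univ} ∪ Set.range co : Set (Set (Fin r))).ncard ≤
        ({Set.univ} : Set (Set (Fin r))).ncard + (Set.range co).ncard :=
      Set.ncard_union_le _ _
    have hrco : (Set.range co).ncard ≤ r := by
      rw [← Set.image_univ]
      calc (co '' Set.univ).ncard ≤ (Set.univ : Set (Fin r)).ncard :=
            Set.ncard_image_le (Set.toFinite _)
        _ = r := by rw [Set.ncard_univ, Nat.card_eq_fintype_card, Fintype.card_fin]
    have hrpm : (Set.range pm).ncard ≤ (r + 1) / 2 := by
      rw [← Set.image_univ]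
      calc (pm '' Set.univ).ncard ≤ (Set.univ : Set (Fin ((r + 1) / 2))).ncard :=
            Set.ncard_image_le (Set.toFinite _)
        _ = (r + 1) / 2 := by rw [Set.ncard_univ, Nat.card_eq_fintype_card, Fintype.card_fin]
    have hs1 : ({Set.univ} : Set (Set (Fin r))).ncard = 1 := Set.ncard_singleton _
    omega
  have hBs : B.ncard ≤ s := by
    have hh : 1 + r + (r + 1) / 2 ≤ s := by omega
    omega
  -- the set of nonempty subsets
  set NE : Set (Set (Fin r)) := {S : Set (Fin r) | S.Nonempty} with hNE_def
  have hNEcard : NE.ncard = 2 ^ r - 1 := by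
    have hcompl : NE = ({∅} : Set (Set (Fin r)))ᶜ := by
      ext S
      simp [hNE_def, Set.nonempty_iff_ne_empty]
    have h := Set.ncard_add_ncard_compl ({∅} : Set (Set (Fin r)))
    rw [Set.ncard_singleton] at h
    have hcard : Nat.card (Set (Fin r)) = 2 ^ r := by
      rw [Nat.card_eq_fintype_card, Fintype.card_set, Fintype.card_fin]
    rw [hcard] at h
    rw [hcompl]
    omega
  have hsNE : s ≤ NE.ncard := by rw [hNEcard]; exact h2
  -- pairs are nonempty
  have hpair_ne : ∀ a b : Fin r, (({a, b} : Set (Fin r))ᶜ).Nonempty := by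
    intro a b
    rcases Set.eq_empty_or_nonempty (({a, b} : Set (Fin r))ᶜ) with he | hne
    · exfalso
      have huniv : ({a, b} : Set (Fin r)) = Set.univ := by
        rw [← compl_compl ({a, b} : Set (Fin r)), he, Set.compl_empty]
      have hle : ({a, b} : Set (Fin r)).ncard ≤ 2 :=
        le_trans (Set.ncard_insert_le _ _) (by simp)
      rw [huniv, Set.ncard_univ, Nat.card_eq_fintype_card, Fintype.card_fin] at hle
      omega
    · exact hne
  have hBNE : B ⊆ NE := by
    intro S hS
    simp only [hB_def, Set.mem_union, Set.mem_singleton_iff, Set.mem_range] at hS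
    rcases hS with (rfl | ⟨i, rfl⟩) | ⟨k, rfl⟩
    · exact ⟨⟨0, by omega⟩, Set.mem_univ _⟩
    · -- {i}ᶜ nonempty
      simp only [hco_def]
      have := hpair_ne i i
      simpa [hNE_def] using this
    · simp only [hpm_def]
      split_ifs with h
      · exact hpair_ne _ _
      · exact hpair_ne _ _
  -- choose the family 𝒲
  obtain ⟨𝒲, hB𝒲, h𝒲NE, h𝒲card⟩ := Set.exists_subsuperset_card_eq hBNE hBs hsNE
  -- basic membership facts
  have hfull : (Set.univ : Set (Fin r)) ∈ 𝒲 :=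
    hB𝒲 (by simp [hB_def])
  have hco : ∀ i : Fin r, ({i}ᶜ : Set (Fin r)) ∈ 𝒲 := by
    intro i
    exact hB𝒲 (by simp only [hB_def, Set.mem_union, Set.mem_range]; exact Or.inl (Or.inr ⟨i, rfl⟩))
  have hpair : ∀ i : Fin r, ∃ j, j ≠ i ∧ ({i, j}ᶜ : Set (Fin r)) ∈ 𝒲 := by
    intro i
    rcases Nat.even_or_odd i.1 with heven | hodd
    · by_cases hlt : i.1 + 1 < r
      · -- partner i+1, k = i/2
        refine ⟨⟨i.1 + 1, hlt⟩, ?_, ?_⟩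
        · intro hcon; have := congrArg Fin.val hcon; simp at this
        · apply hB𝒲
          simp only [hB_def, Set.mem_union, Set.mem_range]
          refine Or.inr ⟨⟨i.1 / 2, by omega⟩, ?_⟩
          simp only [hpm_def]
          have h2k : 2 * (i.1 / 2) = i.1 := by
            rcases heven with ⟨c, hc⟩; omega
          rw [dif_pos (by omega : 2 * (i.1 / 2) + 1 < r)]
          congr 1
          have ha : (⟨2 * (i.1 / 2), by omega⟩ : Fin r) = i := by
            apply Fin.ext; simp [h2k]
          have hb : (⟨2 * (i.1 / 2) + 1, by omega⟩ : Fin r) = (⟨i.1 + 1, hlt⟩ : Fin r) := by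
            apply Fin.ext; simp [h2k]
          rw [ha, hb]
      · -- i = r - 1, r odd; use the tail pair {r-2, r-1}
        have hi_val : i.1 = r - 1 := by have := i.isLt; omega
        have hrodd : r % 2 = 1 := by
          rcases heven with ⟨c, hc⟩; omega
        refine ⟨⟨r - 2, by omega⟩, ?_, ?_⟩
        · intro hcon; have := congrArg Fin.val hcon; simp at this; omega
        · apply hB𝒲
          simp only [hB_def, Set.mem_union, Set.mem_range]
          refine Or.inr ⟨⟨(r - 1) / 2, by omega⟩, ?_⟩
          simp only [hpm_def]
          rw [dif_neg (by omega : ¬ (2 * ((r - 1) / 2) + 1 < r))]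
          congr 1
          have hb : (⟨r - 1, by omega⟩ : Fin r) = i := by
            apply Fin.ext; simp [hi_val]
          rw [hb]
          exact Set.pair_comm _ _
    · -- i odd: partner i - 1, k = i/2
      have hi1 : 1 ≤ i.1 := by
        rcases hodd with ⟨c, hc⟩; omega
      refine ⟨⟨i.1 - 1, by omega⟩, ?_, ?_⟩
      · intro hcon; have := congrArg Fin.val hcon; simp at this; omega
      · apply hB𝒲
        simp only [hB_def, Set.mem_union, Set.mem_range]
        refine Or.inr ⟨⟨i.1 / 2, by omega⟩, ?_⟩
        simp only [hpm_def]
        have h2k : 2 * (i.1 / 2) + 1 = i.1 := by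
          rcases hodd with ⟨c, hc⟩; omega
        rw [dif_pos (by omega : 2 * (i.1 / 2) + 1 < r)]
        have ha : (⟨2 * (i.1 / 2), by omega⟩ : Fin r) = (⟨i.1 - 1, by omega⟩ : Fin r) := by
          apply Fin.ext; simp; omega
        have hb : (⟨2 * (i.1 / 2) + 1, by omega⟩ : Fin r) = i := by
          apply Fin.ext; simp [h2k]
        rw [ha, hb]
        congr 1
        exact Set.pair_comm _ _
  have hne𝒲 : ∀ w : ↥𝒲, w.1.Nonempty := fun w => h𝒲NE w.2
  -- the graph
  haveI : Fintype ↥𝒲 := (Set.toFinite 𝒲).fintype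
  refine ⟨Fin r ⊕ ↥𝒲, inferInstance, gr 𝒲, Set.range Sum.inl, Set.range Sum.inr,
    ?_, ?_, ?_, ?_, ?_⟩
  · -- connected
    set fw : ↥𝒲 := ⟨(Set.univ : Set (Fin r)), hfull⟩ with hfw
    have hadjfw : ∀ i : Fin r, (gr 𝒲).Adj (Sum.inl i) (Sum.inr fw) :=
      fun i => Set.mem_univ i
    have hreach : ∀ v : Fin r ⊕ ↥𝒲, (gr 𝒲).Reachable v (Sum.inr fw) := by
      intro v
      cases v with
      | inl i => exact (hadjfw i).reachable
      | inr w =>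
          rcases eq_or_ne w fw with rfl | hwfw
          · exact SimpleGraph.Reachable.refl _
          · obtain ⟨i, hi⟩ := hne𝒲 w
            have h1 : (gr 𝒲).Adj (Sum.inr w) (Sum.inl i) := hi
            exact h1.reachable.trans (hadjfw i).reachable
    haveI : Nonempty (Fin r ⊕ ↥𝒲) := ⟨Sum.inl ⟨0, by omega⟩⟩
    have hpre : (gr 𝒲).Preconnected := fun u v => (hreach u).trans (hreach v).symm
    exact SimpleGraph.Connected.mk hpre
  · -- bipartite
    refine ⟨?_, ?_, ?_⟩
    · ext x
      cases x with
      | inl i => simp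
      | inr w => simp
    · rw [Set.disjoint_left]
      rintro _ ⟨i, rfl⟩ ⟨w, hcon⟩
      exact Sum.inl_ne_inr hcon.symm
    · intro u v hadj
      cases u with
      | inl i =>
        cases v with
        | inl j => exact absurd hadj (gr_adj_inl_inl)
        | inr w => exact Or.inl ⟨⟨i, rfl⟩, ⟨w, rfl⟩⟩
      | inr w =>
        cases v with
        | inl i => exact Or.inr ⟨⟨w, rfl⟩, ⟨i, rfl⟩⟩
        | inr w' => exact absurd hadj (gr_adj_inr_inr)
  · -- |U| = r
    rw [← Set.image_univ, Set.ncard_image_of_injective _ Sum.inl_injective,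
      Set.ncard_univ, Nat.card_eq_fintype_card, Fintype.card_fin]
  · -- |W| = s
    rw [← Set.image_univ, Set.ncard_image_of_injective _ Sum.inr_injective,
      Set.ncard_univ, ← h𝒲card, ← Nat.card_coe_set_eq]
  · -- the location-domination numbers
    have hG : ldNum (gr 𝒲) = r := by
      apply ldNum_eq
      · refine ⟨Set.range Sum.inl, ld_left hne𝒲, ?_⟩
        rw [← Set.image_univ, Set.ncard_image_of_injective _ Sum.inl_injective,
          Set.ncard_univ, Nat.card_eq_fintype_card, Fintype.card_fin]
      · intro S hS
        exact lower_G hfull hco hS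
    have hGc : ldNum (gr 𝒲)ᶜ = r + 1 := by
      apply ldNum_eq
      · refine ⟨Set.range Sum.inl ∪ {Sum.inr (⟨Set.univ, hfull⟩ : ↥𝒲)},
          ld_left_compl hfull, ?_⟩
        have hdis : Disjoint (Set.range (Sum.inl : Fin r → Fin r ⊕ ↥𝒲))
            ({Sum.inr (⟨Set.univ, hfull⟩ : ↥𝒲)} : Set (Fin r ⊕ ↥𝒲)) := by
          rw [Set.disjoint_left]
          rintro _ ⟨i, rfl⟩ hcon
          simp at hcon
        rw [Set.ncard_union_eq hdis (Set.toFinite _) (Set.toFinite _),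
          ← Set.image_univ, Set.ncard_image_of_injective _ Sum.inl_injective,
          Set.ncard_univ, Nat.card_eq_fintype_card, Fintype.card_fin, Set.ncard_singleton]
      · intro S hS
        exact lower_Gc hr hfull hco hpair hS
    rw [hG, hGc]
end

section
/- For every pair of integers (r,s) with 3 ≤ r ≤ s, there exists a connected bipartite graph G₁ with stable sets of sizes r and s such that λ(Ḡ₁) = λ(G₁) − 1, and there exists a connected bipartite graph G₂ with stable sets of sizes r and s such that λ(Ḡ₂) = λ(G₂). -/
open SimpleGraph

set_option linter.unusedVariables false

namespace Aux19

lemma ldNum_eq {α : Type*} {G : SimpleGraph α} {m : ℕ} (S : Set α) (h : isLDSet G S)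
    (hc : S.ncard = m) (hlb : ∀ T, isLDSet G T → m ≤ T.ncard) : ldNum G = m := by
  refine le_antisymm (Nat.sInf_le ⟨S, h, hc⟩) (le_csInf ⟨m, S, h, hc⟩ ?_)
  rintro n ⟨T, hT, rfl⟩; exact hlb T hT

lemma mem_ne {α : Type*} {T : Set α} {x y : α} (h : x ∈ T) (h' : y ∉ T) : x ≠ y :=
  fun e => h' (e ▸ h)

lemma ne_of_wit {α : Type*} {A B : Set α} {x : α} (h : x ∈ A) (h' : x ∉ B) : A ≠ B :=
  fun e => h' (e ▸ h)

lemma ncard_le_two {α : Type*} [Finite α] {T : Set α} {a b : α} (h : T ⊆ {a, b}) :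
    T.ncard ≤ 2 := by
  refine le_trans (Set.ncard_le_ncard h (Set.toFinite _)) ?_
  refine le_trans (Set.ncard_insert_le _ _) ?_
  simp

lemma ncard_le_three {α : Type*} [Finite α] {T : Set α} {a b c : α} (h : T ⊆ {a, b, c}) :
    T.ncard ≤ 3 := by
  refine le_trans (Set.ncard_le_ncard h (Set.toFinite _)) ?_
  refine le_trans (Set.ncard_insert_le _ _) (Nat.add_le_add_right ?_ 1)
  refine le_trans (Set.ncard_insert_le _ _) ?_
  simp

/-- The "double star": `inl 0` is adjacent to all right vertices and `inr 0`
to all left vertices; no other edges. -/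
def DG (r s : ℕ) : SimpleGraph (Fin r ⊕ Fin s) where
  Adj a b := a.isLeft ≠ b.isLeft ∧
    (a.elim (fun i => i.val = 0) (fun j => j.val = 0) ∨
     b.elim (fun i => i.val = 0) (fun j => j.val = 0))
  symm := ⟨fun a b ⟨h1, h2⟩ => ⟨h1.symm, h2.symm⟩⟩
  loopless := ⟨fun a ⟨h1, _⟩ => h1 rfl⟩

/-- The complete bipartite graph. -/
def KG (r s : ℕ) : SimpleGraph (Fin r ⊕ Fin s) where
  Adj a b := a.isLeft ≠ b.isLeft
  symm := ⟨fun a b h => h.symm⟩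
  loopless := ⟨fun a h => h rfl⟩

variable {r s : ℕ}

lemma DG_adj {a b : Fin r ⊕ Fin s} : (DG r s).Adj a b ↔ a.isLeft ≠ b.isLeft ∧
    (a.elim (fun i => i.val = 0) (fun j => j.val = 0) ∨
     b.elim (fun i => i.val = 0) (fun j => j.val = 0)) := Iff.rfl

lemma KG_adj {a b : Fin r ⊕ Fin s} : (KG r s).Adj a b ↔ a.isLeft ≠ b.isLeft := Iff.rfl

lemma DG_nb_inl {i : Fin r} (hi : i.val ≠ 0) (hs : 0 < s) :
    (DG r s).neighborSet (.inl i) = {Sum.inr ⟨0, hs⟩} := by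
  ext x
  cases x with
  | inl j => simp [neighborSet, DG_adj]
  | inr j => simp [neighborSet, DG_adj, hi, Fin.ext_iff]

lemma DG_nb_inl0 {i : Fin r} (hi : i.val = 0) :
    (DG r s).neighborSet (.inl i) = Set.range Sum.inr := by
  ext x
  cases x with
  | inl j => simp [neighborSet, DG_adj]
  | inr j => simp [neighborSet, DG_adj, hi]

lemma DG_nb_inr {j : Fin s} (hj : j.val ≠ 0) (hr : 0 < r) :
    (DG r s).neighborSet (.inr j) = {Sum.inl ⟨0, hr⟩} := by
  ext x
  cases x with
  | inl i => simp [neighborSet, DG_adj, hj, Fin.ext_iff]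
  | inr i => simp [neighborSet, DG_adj]

lemma DG_nb_inr0 {j : Fin s} (hj : j.val = 0) :
    (DG r s).neighborSet (.inr j) = Set.range Sum.inl := by
  ext x
  cases x with
  | inl i => simp [neighborSet, DG_adj, hj]
  | inr i => simp [neighborSet, DG_adj]

lemma KG_nb_inl (i : Fin r) :
    (KG r s).neighborSet (.inl i) = Set.range Sum.inr := by
  ext x; cases x with
  | inl j => simp [neighborSet, KG_adj]
  | inr j => simp [neighborSet, KG_adj]

lemma KG_nb_inr (j : Fin s) :
    (KG r s).neighborSet (.inr j) = Set.range Sum.inl := by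
  ext x; cases x with
  | inl i => simp [neighborSet, KG_adj]
  | inr i => simp [neighborSet, KG_adj]

lemma DG_conn (hr : 0 < r) (hs : 0 < s) : (DG r s).Connected := by
  rw [connected_iff]
  refine ⟨?_, ⟨.inr ⟨0, hs⟩⟩⟩
  have key : ∀ x, (DG r s).Reachable x (.inr ⟨0, hs⟩) := by
    intro x
    cases x with
    | inl i => exact Adj.reachable (by simp [DG_adj])
    | inr j =>
      by_cases hj : j.val = 0
      · have : (Sum.inr j : Fin r ⊕ Fin s) = .inr ⟨0, hs⟩ := by simp [Fin.ext_iff, hj]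
        rw [this]
      · exact (Adj.reachable (show (DG r s).Adj (.inr j) (.inl ⟨0, hr⟩) by
          simp [DG_adj])).trans (Adj.reachable (by simp [DG_adj]))
  intro u v; exact (key u).trans (key v).symm

lemma KG_conn (hr : 0 < r) (hs : 0 < s) : (KG r s).Connected := by
  rw [connected_iff]
  refine ⟨?_, ⟨.inr ⟨0, hs⟩⟩⟩
  have key : ∀ x, (KG r s).Reachable x (.inr ⟨0, hs⟩) := by
    intro x
    cases x with
    | inl i => exact Adj.reachable (by simp [KG_adj])
    | inr j =>
      exact (Adj.reachable (show (KG r s).Adj (.inr j) (.inl ⟨0, hr⟩) by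
        simp [KG_adj])).trans (Adj.reachable (by simp [KG_adj]))
  intro u v; exact (key u).trans (key v).symm

lemma bip {G : SimpleGraph (Fin r ⊕ Fin s)} (h : ∀ a b, G.Adj a b → a.isLeft ≠ b.isLeft) :
    bipartiteWith G (Set.range Sum.inl) (Set.range Sum.inr) := by
  refine ⟨?_, ?_, ?_⟩
  · ext x; cases x <;> simp
  · rw [Set.disjoint_left]; rintro x ⟨i, rfl⟩ ⟨j, hj⟩; exact Sum.inl_ne_inr hj.symm
  · intro u v huv
    have := h u v huv
    cases u with
    | inl i => cases v with
      | inl j => simp at this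
      | inr j => exact Or.inl ⟨⟨i, rfl⟩, ⟨j, rfl⟩⟩
    | inr i => cases v with
      | inl j => exact Or.inr ⟨⟨i, rfl⟩, ⟨j, rfl⟩⟩
      | inr j => simp at this

lemma ncard_range_inl : (Set.range (Sum.inl : Fin r → Fin r ⊕ Fin s)).ncard = r := by
  rw [← Set.image_univ, Set.ncard_image_of_injective _ Sum.inl_injective, Set.ncard_univ]
  simp

lemma ncard_range_inr : (Set.range (Sum.inr : Fin s → Fin r ⊕ Fin s)).ncard = s := by
  rw [← Set.image_univ, Set.ncard_image_of_injective _ Sum.inr_injective, Set.ncard_univ]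
  simp

lemma card_V : Nat.card (Fin r ⊕ Fin s) = r + s := by simp [Nat.card_sum]

lemma ncard_compl_eq {T : Set (Fin r ⊕ Fin s)} {k : ℕ} (h : T.ncard = k) :
    Tᶜ.ncard = r + s - k := by
  have := Set.ncard_add_ncard_compl T (Set.toFinite _) (Set.toFinite _)
  rw [card_V, h] at this; omega

lemma ncard_ge_of_compl_le {T : Set (Fin r ⊕ Fin s)} {k : ℕ} (h : Tᶜ.ncard ≤ k) :
    r + s - k ≤ T.ncard := by
  have := Set.ncard_add_ncard_compl T (Set.toFinite _) (Set.toFinite _)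
  rw [card_V] at this; omega


lemma DG_ld (hr : 3 ≤ r) (hs : 3 ≤ s) : ldNum (DG r s) = r + s - 2 := by
  have hr0 : 0 < r := by omega
  have hs0 : 0 < s := by omega
  have h1r : (1:ℕ) < r := by omega
  have h1s : (1:ℕ) < s := by omega
  refine ldNum_eq (({.inl ⟨1, h1r⟩, .inr ⟨1, h1s⟩} : Set (Fin r ⊕ Fin s))ᶜ) ⟨?_, ?_⟩ ?_ ?_
  · -- domination
    intro v hv
    rw [Set.notMem_compl_iff] at hv
    simp only [Set.mem_insert_iff, Set.mem_singleton_iff] at hv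
    rcases hv with rfl | rfl
    · exact ⟨.inr ⟨0, hs0⟩, by simp [Fin.ext_iff], by simp [DG_adj]⟩
    · exact ⟨.inl ⟨0, hr0⟩, by simp [Fin.ext_iff], by simp [DG_adj]⟩
  · -- locating
    intro u hu v hv hne
    rw [Set.notMem_compl_iff] at hu hv
    simp only [Set.mem_insert_iff, Set.mem_singleton_iff] at hu hv
    have hwit : (Sum.inr ⟨0, hs0⟩ : Fin r ⊕ Fin s) ∈
        (DG r s).neighborSet (.inl ⟨1, h1r⟩) ∩
          ({.inl ⟨1, h1r⟩, .inr ⟨1, h1s⟩} : Set (Fin r ⊕ Fin s))ᶜ :=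
      ⟨by simp [mem_neighborSet, DG_adj], by simp [Fin.ext_iff]⟩
    have hnwit : (Sum.inr ⟨0, hs0⟩ : Fin r ⊕ Fin s) ∉
        (DG r s).neighborSet (.inr ⟨1, h1s⟩) ∩
          ({.inl ⟨1, h1r⟩, .inr ⟨1, h1s⟩} : Set (Fin r ⊕ Fin s))ᶜ :=
      fun h => by simpa [mem_neighborSet, DG_adj] using h.1
    rcases hu with rfl | rfl <;> rcases hv with rfl | rfl
    · exact absurd rfl hne
    · exact ne_of_wit hwit hnwit
    · exact (ne_of_wit hwit hnwit).symm
    · exact absurd rfl hne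
  · -- cardinality
    exact ncard_compl_eq (Set.ncard_pair (by simp))
  · -- lower bound
    rintro T ⟨hdom, hloc⟩
    have hA : ∀ i j : Fin r, i.val ≠ 0 → j.val ≠ 0 → Sum.inl i ∉ T → Sum.inl j ∉ T → i = j := by
      intro i j hi hj hiT hjT
      by_contra hne
      exact hloc _ hiT _ hjT (fun h => hne (Sum.inl_injective h))
        (by rw [DG_nb_inl hi hs0, DG_nb_inl hj hs0])
    have hB : ∀ i j : Fin s, i.val ≠ 0 → j.val ≠ 0 → Sum.inr i ∉ T → Sum.inr j ∉ T → i = j := by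
      intro i j hi hj hiT hjT
      by_contra hne
      exact hloc _ hiT _ hjT (fun h => hne (Sum.inr_injective h))
        (by rw [DG_nb_inr hi hr0, DG_nb_inr hj hr0])
    have hDomL : ∀ i : Fin r, i.val ≠ 0 → Sum.inl i ∉ T → Sum.inr ⟨0, hs0⟩ ∈ T := by
      intro i hi hiT
      obtain ⟨u, huT, hadj⟩ := hdom _ hiT
      have hu : u ∈ (DG r s).neighborSet (.inl i) := hadj
      rw [DG_nb_inl hi hs0, Set.mem_singleton_iff] at hu
      rwa [hu] at huT
    have hDomR : ∀ j : Fin s, j.val ≠ 0 → Sum.inr j ∉ T → Sum.inl ⟨0, hr0⟩ ∈ T := by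
      intro j hj hjT
      obtain ⟨u, huT, hadj⟩ := hdom _ hjT
      have hu : u ∈ (DG r s).neighborSet (.inr j) := hadj
      rw [DG_nb_inr hj hr0, Set.mem_singleton_iff] at hu
      rwa [hu] at huT
    refine ncard_ge_of_compl_le ?_
    by_cases hL : ∃ i : Fin r, i.val ≠ 0 ∧ Sum.inl i ∉ T
    · obtain ⟨i0, hi0, hi0T⟩ := hL
      have hw0T := hDomL i0 hi0 hi0T
      by_cases hR : ∃ j : Fin s, j.val ≠ 0 ∧ Sum.inr j ∉ T
      · obtain ⟨j0, hj0, hj0T⟩ := hR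
        have hu0T := hDomR j0 hj0 hj0T
        refine ncard_le_two (a := Sum.inl i0) (b := Sum.inr j0) ?_
        intro x hx
        rw [Set.mem_compl_iff] at hx
        cases x with
        | inl i =>
          by_cases hi : i.val = 0
          · rw [show i = (⟨0, hr0⟩ : Fin r) from Fin.ext hi] at hx
            exact absurd hu0T hx
          · simp [hA i i0 hi hi0 hx hi0T]
        | inr j =>
          by_cases hj : j.val = 0
          · rw [show j = (⟨0, hs0⟩ : Fin s) from Fin.ext hj] at hx
            exact absurd hw0T hx
          · simp [hB j j0 hj hj0 hx hj0T]
      · push_neg at hR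
        refine ncard_le_two (a := Sum.inl ⟨0, hr0⟩) (b := Sum.inl i0) ?_
        intro x hx
        rw [Set.mem_compl_iff] at hx
        cases x with
        | inl i =>
          by_cases hi : i.val = 0
          · simp [show i = (⟨0, hr0⟩ : Fin r) from Fin.ext hi]
          · simp [hA i i0 hi hi0 hx hi0T]
        | inr j =>
          by_cases hj : j.val = 0
          · rw [show j = (⟨0, hs0⟩ : Fin s) from Fin.ext hj] at hx
            exact absurd hw0T hx
          · exact absurd (hR j hj) hx
    · push_neg at hL
      by_cases hR : ∃ j : Fin s, j.val ≠ 0 ∧ Sum.inr j ∉ T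
      · obtain ⟨j0, hj0, hj0T⟩ := hR
        have hu0T := hDomR j0 hj0 hj0T
        refine ncard_le_two (a := Sum.inr ⟨0, hs0⟩) (b := Sum.inr j0) ?_
        intro x hx
        rw [Set.mem_compl_iff] at hx
        cases x with
        | inl i =>
          by_cases hi : i.val = 0
          · rw [show i = (⟨0, hr0⟩ : Fin r) from Fin.ext hi] at hx
            exact absurd hu0T hx
          · exact absurd (hL i hi) hx
        | inr j =>
          by_cases hj : j.val = 0
          · simp [show j = (⟨0, hs0⟩ : Fin s) from Fin.ext hj]
          · simp [hB j j0 hj hj0 hx hj0T]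
      · push_neg at hR
        refine ncard_le_two (a := Sum.inl ⟨0, hr0⟩) (b := Sum.inr ⟨0, hs0⟩) ?_
        intro x hx
        rw [Set.mem_compl_iff] at hx
        cases x with
        | inl i =>
          by_cases hi : i.val = 0
          · simp [show i = (⟨0, hr0⟩ : Fin r) from Fin.ext hi]
          · exact absurd (hL i hi) hx
        | inr j =>
          by_cases hj : j.val = 0
          · simp [show j = (⟨0, hs0⟩ : Fin s) from Fin.ext hj]
          · exact absurd (hR j hj) hx


lemma code_diff {α : Type*} {T N : Set α} {a : α} (ha : a ∉ T) : (N \ {a}) ∩ T = N ∩ T := by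
  ext x
  constructor
  · rintro ⟨⟨h1, _⟩, h2⟩; exact ⟨h1, h2⟩
  · rintro ⟨h1, h2⟩; exact ⟨⟨h1, fun e => ha (by rwa [Set.mem_singleton_iff.mp e] at h2)⟩, h2⟩

lemma compl_singleton_inter {α : Type*} {T : Set α} {a : α} (ha : a ∉ T) :
    ({a} : Set α)ᶜ ∩ T = T := by
  ext x
  constructor
  · rintro ⟨_, h2⟩; exact h2
  · intro hx
    exact ⟨fun e => ha (by rwa [Set.mem_singleton_iff.mp e] at hx), hx⟩

lemma KG_ld (hr : 3 ≤ r) (hs : 3 ≤ s) : ldNum (KG r s) = r + s - 2 := by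
  have hr0 : 0 < r := by omega
  have hs0 : 0 < s := by omega
  have h1r : (1:ℕ) < r := by omega
  have h1s : (1:ℕ) < s := by omega
  refine ldNum_eq (({.inl ⟨0, hr0⟩, .inr ⟨0, hs0⟩} : Set (Fin r ⊕ Fin s))ᶜ) ⟨?_, ?_⟩ ?_ ?_
  · intro v hv
    rw [Set.notMem_compl_iff] at hv
    simp only [Set.mem_insert_iff, Set.mem_singleton_iff] at hv
    rcases hv with rfl | rfl
    · exact ⟨.inr ⟨1, h1s⟩, by simp [Fin.ext_iff], by simp [KG_adj]⟩
    · exact ⟨.inl ⟨1, h1r⟩, by simp [Fin.ext_iff], by simp [KG_adj]⟩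
  · intro u hu v hv hne
    rw [Set.notMem_compl_iff] at hu hv
    simp only [Set.mem_insert_iff, Set.mem_singleton_iff] at hu hv
    have hwit : (Sum.inr ⟨1, h1s⟩ : Fin r ⊕ Fin s) ∈
        (KG r s).neighborSet (.inl ⟨0, hr0⟩) ∩
          ({.inl ⟨0, hr0⟩, .inr ⟨0, hs0⟩} : Set (Fin r ⊕ Fin s))ᶜ :=
      ⟨by simp [mem_neighborSet, KG_adj], by simp [Fin.ext_iff]⟩
    have hnwit : (Sum.inr ⟨1, h1s⟩ : Fin r ⊕ Fin s) ∉
        (KG r s).neighborSet (.inr ⟨0, hs0⟩) ∩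
          ({.inl ⟨0, hr0⟩, .inr ⟨0, hs0⟩} : Set (Fin r ⊕ Fin s))ᶜ :=
      fun h => by simpa [mem_neighborSet, KG_adj] using h.1
    rcases hu with rfl | rfl <;> rcases hv with rfl | rfl
    · exact absurd rfl hne
    · exact ne_of_wit hwit hnwit
    · exact (ne_of_wit hwit hnwit).symm
    · exact absurd rfl hne
  · exact ncard_compl_eq (Set.ncard_pair (by simp))
  · rintro T ⟨hdom, hloc⟩
    have hA : ∀ i j : Fin r, Sum.inl i ∉ T → Sum.inl j ∉ T → i = j := by
      intro i j hiT hjT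
      by_contra hne
      exact hloc _ hiT _ hjT (fun h => hne (Sum.inl_injective h))
        (by rw [KG_nb_inl i, KG_nb_inl j])
    have hB : ∀ i j : Fin s, Sum.inr i ∉ T → Sum.inr j ∉ T → i = j := by
      intro i j hiT hjT
      by_contra hne
      exact hloc _ hiT _ hjT (fun h => hne (Sum.inr_injective h))
        (by rw [KG_nb_inr i, KG_nb_inr j])
    refine ncard_ge_of_compl_le ?_
    by_cases hL : ∃ i : Fin r, Sum.inl i ∉ T
    · obtain ⟨i0, hi0T⟩ := hL
      by_cases hR : ∃ j : Fin s, Sum.inr j ∉ T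
      · obtain ⟨j0, hj0T⟩ := hR
        refine ncard_le_two (a := Sum.inl i0) (b := Sum.inr j0) ?_
        intro x hx
        rw [Set.mem_compl_iff] at hx
        cases x with
        | inl i => simp [hA i i0 hx hi0T]
        | inr j => simp [hB j j0 hx hj0T]
      · push_neg at hR
        refine ncard_le_two (a := Sum.inl i0) (b := Sum.inl i0) ?_
        intro x hx
        rw [Set.mem_compl_iff] at hx
        cases x with
        | inl i => simp [hA i i0 hx hi0T]
        | inr j => exact absurd (hR j) hx
    · push_neg at hL
      by_cases hR : ∃ j : Fin s, Sum.inr j ∉ T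
      · obtain ⟨j0, hj0T⟩ := hR
        refine ncard_le_two (a := Sum.inr j0) (b := Sum.inr j0) ?_
        intro x hx
        rw [Set.mem_compl_iff] at hx
        cases x with
        | inl i => exact absurd (hL i) hx
        | inr j => simp [hB j j0 hx hj0T]
      · push_neg at hR
        refine ncard_le_two (a := Sum.inl ⟨0, hr0⟩) (b := Sum.inr ⟨0, hs0⟩) ?_
        intro x hx
        rw [Set.mem_compl_iff] at hx
        cases x with
        | inl i => exact absurd (hL i) hx
        | inr j => exact absurd (hR j) hx

lemma KG_compl_ld (hr : 3 ≤ r) (hs : 3 ≤ s) : ldNum (KG r s)ᶜ = r + s - 2 := by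
  have hr0 : 0 < r := by omega
  have hs0 : 0 < s := by omega
  have h1r : (1:ℕ) < r := by omega
  have h1s : (1:ℕ) < s := by omega
  refine ldNum_eq (({.inl ⟨0, hr0⟩, .inr ⟨0, hs0⟩} : Set (Fin r ⊕ Fin s))ᶜ) ⟨?_, ?_⟩ ?_ ?_
  · intro v hv
    rw [Set.notMem_compl_iff] at hv
    simp only [Set.mem_insert_iff, Set.mem_singleton_iff] at hv
    rcases hv with rfl | rfl
    · exact ⟨.inl ⟨1, h1r⟩, by simp [Fin.ext_iff],
        by simp [compl_adj, KG_adj, Fin.ext_iff]⟩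
    · exact ⟨.inr ⟨1, h1s⟩, by simp [Fin.ext_iff],
        by simp [compl_adj, KG_adj, Fin.ext_iff]⟩
  · intro u hu v hv hne
    rw [Set.notMem_compl_iff] at hu hv
    simp only [Set.mem_insert_iff, Set.mem_singleton_iff] at hu hv
    have hwit : (Sum.inl ⟨1, h1r⟩ : Fin r ⊕ Fin s) ∈
        (KG r s)ᶜ.neighborSet (.inl ⟨0, hr0⟩) ∩
          ({.inl ⟨0, hr0⟩, .inr ⟨0, hs0⟩} : Set (Fin r ⊕ Fin s))ᶜ :=
      ⟨by simp [mem_neighborSet, compl_adj, KG_adj, Fin.ext_iff], by simp [Fin.ext_iff]⟩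
    have hnwit : (Sum.inl ⟨1, h1r⟩ : Fin r ⊕ Fin s) ∉
        (KG r s)ᶜ.neighborSet (.inr ⟨0, hs0⟩) ∩
          ({.inl ⟨0, hr0⟩, .inr ⟨0, hs0⟩} : Set (Fin r ⊕ Fin s))ᶜ :=
      fun h => by simpa [mem_neighborSet, compl_adj, KG_adj] using h.1
    rcases hu with rfl | rfl <;> rcases hv with rfl | rfl
    · exact absurd rfl hne
    · exact ne_of_wit hwit hnwit
    · exact (ne_of_wit hwit hnwit).symm
    · exact absurd rfl hne
  · exact ncard_compl_eq (Set.ncard_pair (by simp))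
  · rintro T ⟨hdom, hloc⟩
    have hA : ∀ i j : Fin r, Sum.inl i ∉ T → Sum.inl j ∉ T → i = j := by
      intro i j hiT hjT
      by_contra hne
      refine hloc _ hiT _ hjT (fun h => hne (Sum.inl_injective h)) ?_
      rw [neighborSet_compl, neighborSet_compl, KG_nb_inl i, KG_nb_inl j,
        code_diff hiT, code_diff hjT]
    have hB : ∀ i j : Fin s, Sum.inr i ∉ T → Sum.inr j ∉ T → i = j := by
      intro i j hiT hjT
      by_contra hne
      refine hloc _ hiT _ hjT (fun h => hne (Sum.inr_injective h)) ?_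
      rw [neighborSet_compl, neighborSet_compl, KG_nb_inr i, KG_nb_inr j,
        code_diff hiT, code_diff hjT]
    refine ncard_ge_of_compl_le ?_
    by_cases hL : ∃ i : Fin r, Sum.inl i ∉ T
    · obtain ⟨i0, hi0T⟩ := hL
      by_cases hR : ∃ j : Fin s, Sum.inr j ∉ T
      · obtain ⟨j0, hj0T⟩ := hR
        refine ncard_le_two (a := Sum.inl i0) (b := Sum.inr j0) ?_
        intro x hx
        rw [Set.mem_compl_iff] at hx
        cases x with
        | inl i => simp [hA i i0 hx hi0T]
        | inr j => simp [hB j j0 hx hj0T]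
      · push_neg at hR
        refine ncard_le_two (a := Sum.inl i0) (b := Sum.inl i0) ?_
        intro x hx
        rw [Set.mem_compl_iff] at hx
        cases x with
        | inl i => simp [hA i i0 hx hi0T]
        | inr j => exact absurd (hR j) hx
    · push_neg at hL
      by_cases hR : ∃ j : Fin s, Sum.inr j ∉ T
      · obtain ⟨j0, hj0T⟩ := hR
        refine ncard_le_two (a := Sum.inr j0) (b := Sum.inr j0) ?_
        intro x hx
        rw [Set.mem_compl_iff] at hx
        cases x with
        | inl i => exact absurd (hL i) hx
        | inr j => simp [hB j j0 hx hj0T]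
      · push_neg at hR
        refine ncard_le_two (a := Sum.inl ⟨0, hr0⟩) (b := Sum.inr ⟨0, hs0⟩) ?_
        intro x hx
        rw [Set.mem_compl_iff] at hx
        cases x with
        | inl i => exact absurd (hL i) hx
        | inr j => exact absurd (hR j) hx


lemma DG_compl_ld (hr : 3 ≤ r) (hs : 3 ≤ s) : ldNum (DG r s)ᶜ = r + s - 3 := by
  have hr0 : 0 < r := by omega
  have hs0 : 0 < s := by omega
  have h1r : (1:ℕ) < r := by omega
  have h2r : (2:ℕ) < r := by omega
  have h1s : (1:ℕ) < s := by omega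
  refine ldNum_eq
    (({.inl ⟨0, hr0⟩, .inl ⟨1, h1r⟩, .inr ⟨0, hs0⟩} : Set (Fin r ⊕ Fin s))ᶜ) ⟨?_, ?_⟩ ?_ ?_
  · -- domination
    intro v hv
    rw [Set.notMem_compl_iff] at hv
    simp only [Set.mem_insert_iff, Set.mem_singleton_iff] at hv
    rcases hv with rfl | rfl | rfl
    · exact ⟨.inl ⟨2, h2r⟩, by simp [Fin.ext_iff],
        by simp [compl_adj, DG_adj, Fin.ext_iff]⟩
    · exact ⟨.inl ⟨2, h2r⟩, by simp [Fin.ext_iff],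
        by simp [compl_adj, DG_adj, Fin.ext_iff]⟩
    · exact ⟨.inr ⟨1, h1s⟩, by simp [Fin.ext_iff],
        by simp [compl_adj, DG_adj, Fin.ext_iff]⟩
  · -- locating
    intro u hu v hv hne
    rw [Set.notMem_compl_iff] at hu hv
    simp only [Set.mem_insert_iff, Set.mem_singleton_iff] at hu hv
    have hw1c : (Sum.inr ⟨1, h1s⟩ : Fin r ⊕ Fin s) ∈
        (({.inl ⟨0, hr0⟩, .inl ⟨1, h1r⟩, .inr ⟨0, hs0⟩} : Set (Fin r ⊕ Fin s))ᶜ) := by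
      simp [Fin.ext_iff]
    have hu2c : (Sum.inl ⟨2, h2r⟩ : Fin r ⊕ Fin s) ∈
        (({.inl ⟨0, hr0⟩, .inl ⟨1, h1r⟩, .inr ⟨0, hs0⟩} : Set (Fin r ⊕ Fin s))ᶜ) := by
      simp [Fin.ext_iff]
    -- u0 vs u1 : witness w1 is a compl-neighbor of u1 but not of u0
    have n01 : (DG r s)ᶜ.neighborSet (.inl ⟨1, h1r⟩) ∩
          (({.inl ⟨0, hr0⟩, .inl ⟨1, h1r⟩, .inr ⟨0, hs0⟩} : Set (Fin r ⊕ Fin s))ᶜ) ≠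
        (DG r s)ᶜ.neighborSet (.inl ⟨0, hr0⟩) ∩
          (({.inl ⟨0, hr0⟩, .inl ⟨1, h1r⟩, .inr ⟨0, hs0⟩} : Set (Fin r ⊕ Fin s))ᶜ) :=
      ne_of_wit (x := Sum.inr ⟨1, h1s⟩)
        ⟨by simp [mem_neighborSet, compl_adj, DG_adj, Fin.ext_iff], hw1c⟩
        (fun h => by simpa [mem_neighborSet, compl_adj, DG_adj, Fin.ext_iff] using h.1)
    -- u0 vs w0 : witness u2
    have n02 : (DG r s)ᶜ.neighborSet (.inl ⟨0, hr0⟩) ∩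
          (({.inl ⟨0, hr0⟩, .inl ⟨1, h1r⟩, .inr ⟨0, hs0⟩} : Set (Fin r ⊕ Fin s))ᶜ) ≠
        (DG r s)ᶜ.neighborSet (.inr ⟨0, hs0⟩) ∩
          (({.inl ⟨0, hr0⟩, .inl ⟨1, h1r⟩, .inr ⟨0, hs0⟩} : Set (Fin r ⊕ Fin s))ᶜ) :=
      ne_of_wit (x := Sum.inl ⟨2, h2r⟩)
        ⟨by simp [mem_neighborSet, compl_adj, DG_adj, Fin.ext_iff], hu2c⟩
        (fun h => by simpa [mem_neighborSet, compl_adj, DG_adj, Fin.ext_iff] using h.1)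
    -- u1 vs w0 : witness u2
    have n12 : (DG r s)ᶜ.neighborSet (.inl ⟨1, h1r⟩) ∩
          (({.inl ⟨0, hr0⟩, .inl ⟨1, h1r⟩, .inr ⟨0, hs0⟩} : Set (Fin r ⊕ Fin s))ᶜ) ≠
        (DG r s)ᶜ.neighborSet (.inr ⟨0, hs0⟩) ∩
          (({.inl ⟨0, hr0⟩, .inl ⟨1, h1r⟩, .inr ⟨0, hs0⟩} : Set (Fin r ⊕ Fin s))ᶜ) :=
      ne_of_wit (x := Sum.inl ⟨2, h2r⟩)
        ⟨by simp [mem_neighborSet, compl_adj, DG_adj, Fin.ext_iff], hu2c⟩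
        (fun h => by simpa [mem_neighborSet, compl_adj, DG_adj, Fin.ext_iff] using h.1)
    rcases hu with rfl | rfl | rfl <;> rcases hv with rfl | rfl | rfl
    · exact absurd rfl hne
    · exact n01.symm
    · exact n02
    · exact n01
    · exact absurd rfl hne
    · exact n12
    · exact n02.symm
    · exact n12.symm
    · exact absurd rfl hne
  · -- cardinality
    refine ncard_compl_eq ?_
    rw [Set.ncard_insert_of_notMem (by simp [Fin.ext_iff]),
      Set.ncard_pair (by simp [Fin.ext_iff])]
  · -- lower bound
    rintro T ⟨hdom, hloc⟩
    have hA : ∀ i j : Fin r, i.val ≠ 0 → j.val ≠ 0 → Sum.inl i ∉ T → Sum.inl j ∉ T → i = j := by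
      intro i j hi hj hiT hjT
      by_contra hne
      refine hloc _ hiT _ hjT (fun h => hne (Sum.inl_injective h)) ?_
      rw [neighborSet_compl, neighborSet_compl, DG_nb_inl hi hs0, DG_nb_inl hj hs0,
        code_diff hiT, code_diff hjT]
    have hB : ∀ i j : Fin s, i.val ≠ 0 → j.val ≠ 0 → Sum.inr i ∉ T → Sum.inr j ∉ T → i = j := by
      intro i j hi hj hiT hjT
      by_contra hne
      refine hloc _ hiT _ hjT (fun h => hne (Sum.inr_injective h)) ?_
      rw [neighborSet_compl, neighborSet_compl, DG_nb_inr hi hr0, DG_nb_inr hj hr0,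
        code_diff hiT, code_diff hjT]
    have hC : ∀ i : Fin r, ∀ j : Fin s, i.val ≠ 0 → j.val ≠ 0 → Sum.inl i ∉ T →
        Sum.inr j ∉ T → (Sum.inl ⟨0, hr0⟩ : Fin r ⊕ Fin s) ∈ T ∨
          (Sum.inr ⟨0, hs0⟩ : Fin r ⊕ Fin s) ∈ T := by
      intro i j hi hj hiT hjT
      by_contra hcon
      push_neg at hcon
      refine hloc _ hiT _ hjT (by simp) ?_
      rw [neighborSet_compl, neighborSet_compl, DG_nb_inl hi hs0, DG_nb_inr hj hr0,
        code_diff hiT, code_diff hjT, Set.compl_eq_univ_diff, Set.compl_eq_univ_diff,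
        code_diff hcon.2, code_diff hcon.1]
    refine ncard_ge_of_compl_le ?_
    by_cases hL : ∃ i : Fin r, i.val ≠ 0 ∧ Sum.inl i ∉ T
    · obtain ⟨i0, hi0, hi0T⟩ := hL
      by_cases hR : ∃ j : Fin s, j.val ≠ 0 ∧ Sum.inr j ∉ T
      · obtain ⟨j0, hj0, hj0T⟩ := hR
        rcases hC i0 j0 hi0 hj0 hi0T hj0T with hu0T | hw0T
        · refine ncard_le_three (a := Sum.inr ⟨0, hs0⟩) (b := Sum.inl i0) (c := Sum.inr j0) ?_
          intro x hx
          rw [Set.mem_compl_iff] at hx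
          cases x with
          | inl i =>
            by_cases hi : i.val = 0
            · rw [show i = (⟨0, hr0⟩ : Fin r) from Fin.ext hi] at hx
              exact absurd hu0T hx
            · simp [hA i i0 hi hi0 hx hi0T]
          | inr j =>
            by_cases hj : j.val = 0
            · simp [show j = (⟨0, hs0⟩ : Fin s) from Fin.ext hj]
            · simp [hB j j0 hj hj0 hx hj0T]
        · refine ncard_le_three (a := Sum.inl ⟨0, hr0⟩) (b := Sum.inl i0) (c := Sum.inr j0) ?_
          intro x hx
          rw [Set.mem_compl_iff] at hx
          cases x with
          | inl i =>
            by_cases hi : i.val = 0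
            · simp [show i = (⟨0, hr0⟩ : Fin r) from Fin.ext hi]
            · simp [hA i i0 hi hi0 hx hi0T]
          | inr j =>
            by_cases hj : j.val = 0
            · rw [show j = (⟨0, hs0⟩ : Fin s) from Fin.ext hj] at hx
              exact absurd hw0T hx
            · simp [hB j j0 hj hj0 hx hj0T]
      · push_neg at hR
        refine ncard_le_three (a := Sum.inl ⟨0, hr0⟩) (b := Sum.inr ⟨0, hs0⟩)
          (c := Sum.inl i0) ?_
        intro x hx
        rw [Set.mem_compl_iff] at hx
        cases x with
        | inl i =>
          by_cases hi : i.val = 0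
          · simp [show i = (⟨0, hr0⟩ : Fin r) from Fin.ext hi]
          · simp [hA i i0 hi hi0 hx hi0T]
        | inr j =>
          by_cases hj : j.val = 0
          · simp [show j = (⟨0, hs0⟩ : Fin s) from Fin.ext hj]
          · exact absurd (hR j hj) hx
    · push_neg at hL
      by_cases hR : ∃ j : Fin s, j.val ≠ 0 ∧ Sum.inr j ∉ T
      · obtain ⟨j0, hj0, hj0T⟩ := hR
        refine ncard_le_three (a := Sum.inl ⟨0, hr0⟩) (b := Sum.inr ⟨0, hs0⟩)
          (c := Sum.inr j0) ?_
        intro x hx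
        rw [Set.mem_compl_iff] at hx
        cases x with
        | inl i =>
          by_cases hi : i.val = 0
          · simp [show i = (⟨0, hr0⟩ : Fin r) from Fin.ext hi]
          · exact absurd (hL i hi) hx
        | inr j =>
          by_cases hj : j.val = 0
          · simp [show j = (⟨0, hs0⟩ : Fin s) from Fin.ext hj]
          · simp [hB j j0 hj hj0 hx hj0T]
      · push_neg at hR
        refine ncard_le_three (a := Sum.inl ⟨0, hr0⟩) (b := Sum.inr ⟨0, hs0⟩)
          (c := Sum.inr ⟨0, hs0⟩) ?_
        intro x hx
        rw [Set.mem_compl_iff] at hx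
        cases x with
        | inl i =>
          by_cases hi : i.val = 0
          · simp [show i = (⟨0, hr0⟩ : Fin r) from Fin.ext hi]
          · exact absurd (hL i hi) hx
        | inr j =>
          by_cases hj : j.val = 0
          · simp [show j = (⟨0, hs0⟩ : Fin s) from Fin.ext hj]
          · exact absurd (hR j hj) hx

end Aux19

theorem stmt19 (r s : ℕ) (hr : 3 ≤ r) (hrs : r ≤ s) :
    (∃ (V : Type) (_ : Fintype V) (G : SimpleGraph V) (U W : Set V),
      G.Connected ∧ bipartiteWith G U W ∧ U.ncard = r ∧ W.ncard = s ∧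
      ldNum Gᶜ + 1 = ldNum G) ∧
    (∃ (V : Type) (_ : Fintype V) (G : SimpleGraph V) (U W : Set V),
      G.Connected ∧ bipartiteWith G U W ∧ U.ncard = r ∧ W.ncard = s ∧
      ldNum Gᶜ = ldNum G) := by
  have hs : 3 ≤ s := le_trans hr hrs
  constructor
  · refine ⟨Fin r ⊕ Fin s, inferInstance, Aux19.DG r s, Set.range Sum.inl, Set.range Sum.inr,
      Aux19.DG_conn (by omega) (by omega), Aux19.bip (fun a b h => h.1),
      Aux19.ncard_range_inl, Aux19.ncard_range_inr, ?_⟩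
    rw [Aux19.DG_compl_ld hr hs, Aux19.DG_ld hr hs]
    omega
  · refine ⟨Fin r ⊕ Fin s, inferInstance, Aux19.KG r s, Set.range Sum.inl, Set.range Sum.inr,
      Aux19.KG_conn (by omega) (by omega), Aux19.bip (fun a b h => h),
      Aux19.ncard_range_inl, Aux19.ncard_range_inr, ?_⟩
    rw [Aux19.KG_compl_ld hr hs, Aux19.KG_ld hr hs]
end
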